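/- Suppose that for every even L the linear functional ⟨·⟩ is reflection positive both for reflections through edges and for reflections through vertices, the two-point function G_L is torus symmetric, there are constants C₁ > 0 and M ∈ (0,∞) such that liminf over even L → ∞ of (1/|T_L|) Σ_{x∈T_L} G_L(o,x) ≥ C₁, and G_L(x,y) ≤ M for all even L and all x, y ∈ T_L. Then for any ε ∈ (0, 1/2) and any C < C₁, for all sufficiently large even L the following holds: for every x ∈ T_L such that for every i ∈ {1,…,d} the coordinate |x·e_i| lies in (0, εL), one has G_L(o, x) ≥ M − (1/2 − ε)^{−d} (M − C). -/

import Mathlib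

set_option linter.unusedSectionVars false
set_option maxHeartbeats 1600000


namespace RPPaper

/-- The torus `T_L = (ℤ/Lℤ)^d`. -/
abbrev Torus (d L : ℕ) : Type := Fin d → ZMod L

/-- The unit vector `e i`. -/
def unitVec {d L : ℕ} (i : Fin d) : Torus d L := fun k => if k = i then 1 else 0

/-- The point `a • e i` on the torus. -/
def axis {d L : ℕ} (i : Fin d) (a : ZMod L) : Torus d L := fun k => if k = i then a else 0

/-- The integer representative of `a : ZMod L` in the interval `(-L/2, L/2]`. -/
def coordRep (L : ℕ) [NeZero L] (a : ZMod L) : ℤ :=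
  if (a.val : ℤ) ≤ (L : ℤ) / 2 then (a.val : ℤ) else (a.val : ℤ) - (L : ℤ)

/-- The reflection of the torus in the hyperplane `{z : z·e i = t/2}` (here `t = 2m`);
it is a reflection through edges if `t` is odd, and through vertices if `t` is even. -/
def reflect {d L : ℕ} (i : Fin d) (t : ℕ) (x : Torus d L) : Torus d L :=
  Function.update x i ((t : ZMod L) - x i)

/-- The positive half `T_L^+` of the torus associated to the reflection in the hyperplane
`{z : z·e i = t/2}`. -/
def posHalf (d L : ℕ) [NeZero L] (i : Fin d) (t : ℕ) : Finset (Torus d L) :=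
  if t % 2 = 1 then Finset.univ.filter (fun x => (x i - (((t + 1) / 2 : ℕ) : ZMod L)).val < L / 2)
  else Finset.univ.filter (fun x => (x i - ((t / 2 : ℕ) : ZMod L)).val ≤ L / 2)

/-- The negative half `T_L^- = θ(T_L^+)`. -/
def negHalf (d L : ℕ) [NeZero L] (i : Fin d) (t : ℕ) : Finset (Torus d L) :=
  (posHalf d L i t).image (reflect i t)

/-- The state space `S = ∏_{x ∈ T_L} Σ_x` (all local state spaces equal to `Sig`). -/
abbrev MState (d L : ℕ) (Sig : Type*) : Type _ := Torus d L → Sig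

/-- `A : S → ℝ` has domain `D` if it depends only on the local states in `D`. -/
def HasDomain {d L : ℕ} {Sig : Type*} (A : MState d L Sig → ℝ) (D : Set (Torus d L)) : Prop :=
  ∀ w₁ w₂ : MState d L Sig, (∀ x ∈ D, w₁ x = w₂ x) → A w₁ = A w₂

/-- The action `θA (w) = A (θ w)`, where `(θ w) x = w (θ x)`, of the reflection on functions. -/
def reflectFun {d L : ℕ} {Sig : Type*} (i : Fin d) (t : ℕ) (A : MState d L Sig → ℝ) :
    MState d L Sig → ℝ := fun w => A (fun x => w (reflect i t x))

/-- `⟨·⟩` is reflection positive with respect to the reflection in the hyperplane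
`{z : z·e i = t/2}`: for all `A, B ∈ A_L^+` (members of the algebra with domain `T_L^+`),
`⟨A·θB⟩ = ⟨B·θA⟩` and `⟨A·θA⟩ ≥ 0`. -/
def IsRP {d L : ℕ} {Sig : Type*} [NeZero L] (AL : Subalgebra ℝ (MState d L Sig → ℝ))
    (phi : (MState d L Sig → ℝ) →ₗ[ℝ] ℝ) (i : Fin d) (t : ℕ) : Prop :=
  ∀ A B : MState d L Sig → ℝ, A ∈ AL → B ∈ AL →
    HasDomain A ↑(posHalf d L i t) → HasDomain B ↑(posHalf d L i t) →
    phi (A * reflectFun i t B) = phi (B * reflectFun i t A) ∧ 0 ≤ phi (A * reflectFun i t A)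

/-- Reflection positivity for all reflections through edges. -/
def RPEdges {d L : ℕ} {Sig : Type*} [NeZero L] (AL : Subalgebra ℝ (MState d L Sig → ℝ))
    (phi : (MState d L Sig → ℝ) →ₗ[ℝ] ℝ) : Prop :=
  ∀ (i : Fin d) (t : ℕ), t < 2 * L → t % 2 = 1 → IsRP AL phi i t

/-- Reflection positivity for all reflections through vertices. -/
def RPVertices {d L : ℕ} {Sig : Type*} [NeZero L] (AL : Subalgebra ℝ (MState d L Sig → ℝ))
    (phi : (MState d L Sig → ℝ) →ₗ[ℝ] ℝ) : Prop :=
  ∀ (i : Fin d) (t : ℕ), t < 2 * L → t % 2 = 0 → IsRP AL phi i t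

/-- The single-site function `F^j_x`, obtained from a function `f : Sig → ℝ` of the local
state at the origin by the (path-independent) sequence of reflections sending `o` to `x`. -/
def site {d L : ℕ} {Sig : Type*} (f : Sig → ℝ) (x : Torus d L) : MState d L Sig → ℝ :=
  fun w => f (w x)

/-- The two-point function `G_L(x,y) = ⟨F²_x F²_y ∏_{z ≠ x,y} F¹_z⟩`. -/
noncomputable def twoPoint {d L : ℕ} {Sig : Type*} [NeZero L]
    (phi : (MState d L Sig → ℝ) →ₗ[ℝ] ℝ) (f1 f2 : Sig → ℝ) (x y : Torus d L) : ℝ :=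
  phi (fun w => f2 (w x) * f2 (w y) * ∏ z ∈ (Finset.univ.erase x).erase y, f1 (w z))

/-- Torus symmetry: `⟨∏_{x∈A}F¹_x ∏_{x∈B}F²_x⟩ = ⟨∏_{x∈A+z}F¹_x ∏_{x∈B+z}F²_x⟩`. -/
def TorusSymmetric {d L : ℕ} {Sig : Type*} [NeZero L]
    (phi : (MState d L Sig → ℝ) →ₗ[ℝ] ℝ) (f1 f2 : Sig → ℝ) : Prop :=
  ∀ (A B : Finset (Torus d L)) (z : Torus d L),
    phi (fun w => (∏ x ∈ A, f1 (w x)) * ∏ x ∈ B, f2 (w x)) =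
      phi (fun w => (∏ x ∈ A, f1 (w (x + z))) * ∏ x ∈ B, f2 (w (x + z)))


section Geom
variable {d L : ℕ} [NeZero L]

lemma val_neg_one_sub (a : ZMod L) : (-1 - a).val = L - 1 - a.val := by
  have hL : 0 < L := Nat.pos_of_ne_zero (NeZero.ne L)
  have hv : a.val < L := ZMod.val_lt a
  have h1 : (-1 - a) = ((L - 1 - a.val : ℕ) : ZMod L) := by
    have e1 : L - 1 - a.val = L - (1 + a.val) := by omega
    rw [e1, Nat.cast_sub (by omega)]
    push_cast
    rw [ZMod.natCast_self, ZMod.natCast_val, ZMod.cast_id]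
    ring
  rw [h1, ZMod.val_cast_of_lt (by omega)]

lemma mem_posHalf_one {j : Fin d} {x : Torus d L} :
    x ∈ posHalf d L j 1 ↔ (x j - 1).val < L / 2 := by
  simp [posHalf]

@[simp] lemma reflect_apply_self {j : Fin d} {t : ℕ} (x : Torus d L) :
    reflect j t x j = (t : ZMod L) - x j := by simp [reflect]

lemma reflect_apply_ne {j i : Fin d} {t : ℕ} (x : Torus d L) (h : i ≠ j) :
    reflect j t x i = x i := by simp [reflect, Function.update_of_ne h]

lemma reflect_reflect (j : Fin d) (t : ℕ) (x : Torus d L) :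
    reflect j t (reflect j t x) = x := by
  funext i
  by_cases h : i = j
  · subst h; simp [reflect]
  · rw [reflect_apply_ne _ h, reflect_apply_ne _ h]

lemma reflect_injective (j : Fin d) (t : ℕ) :
    Function.Injective (fun x : Torus d L => reflect j t x) := by
  intro x y hxy
  have := congrArg (reflect j t) hxy
  simpa [reflect_reflect] using this

/-- key partition fact -/
lemma reflect_mem_posHalf_iff (hL : Even L) {j : Fin d} {x : Torus d L} :
    reflect j 1 x ∈ posHalf d L j 1 ↔ x ∉ posHalf d L j 1 := by
  have hL2 : L / 2 + L / 2 = L := by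
    obtain ⟨m, rfl⟩ := hL; omega
  rw [mem_posHalf_one, mem_posHalf_one, reflect_apply_self]
  have h1 : ((1:ℕ) : ZMod L) - x j - 1 = -1 - (x j - 1) := by push_cast; ring
  rw [h1, val_neg_one_sub]
  have := ZMod.val_lt (x j - 1)
  omega

lemma not_mem_posHalf_reflect (hL : Even L) {j : Fin d} {x : Torus d L}
    (hx : x ∈ posHalf d L j 1) : reflect j 1 x ∉ posHalf d L j 1 := by
  intro hc
  rw [reflect_mem_posHalf_iff hL] at hc
  exact hc hx

lemma ne_reflect_of_mem (hL : Even L) {j : Fin d} {x y : Torus d L}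
    (hx : x ∈ posHalf d L j 1) (hy : y ∈ posHalf d L j 1) : x ≠ reflect j 1 y := by
  intro h
  exact not_mem_posHalf_reflect hL hy (h ▸ hx)

lemma union_posHalf_reflect (hL : Even L) (j : Fin d) :
    (posHalf d L j 1) ∪ (posHalf d L j 1).image (reflect j 1) = Finset.univ := by
  apply Finset.eq_univ_of_forall
  intro x
  by_cases hx : x ∈ posHalf d L j 1
  · exact Finset.mem_union_left _ hx
  · apply Finset.mem_union_right
    apply Finset.mem_image.mpr
    refine ⟨reflect j 1 x, ?_, reflect_reflect j 1 x⟩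
    rw [reflect_mem_posHalf_iff hL]
    exact hx

lemma disjoint_posHalf_reflect (hL : Even L) (j : Fin d) :
    Disjoint (posHalf d L j 1) ((posHalf d L j 1).image (reflect j 1)) := by
  rw [Finset.disjoint_right]
  intro x hx hx'
  obtain ⟨y, hy, rfl⟩ := Finset.mem_image.mp hx
  exact not_mem_posHalf_reflect hL hy hx'

end Geom

section Alg
variable {d L : ℕ} [NeZero L] {Sig : Type*}
variable (f1 f2 : Sig → ℝ)

/-- the basic vector `F²_w ∏_{z ∈ T⁺ ∖ {w}} F¹_z`. -/
noncomputable def Vf (j : Fin d) (w : Torus d L) : MState d L Sig → ℝ :=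
  fun ω => f2 (ω w) * ∏ z ∈ (posHalf d L j 1).erase w, f1 (ω z)

lemma Vf_eq (j : Fin d) (w : Torus d L) :
    Vf f1 f2 j w = site f2 w * ∏ z ∈ (posHalf d L j 1).erase w, site f1 z := by
  funext ω
  simp [Vf, site, Finset.prod_apply]

lemma Vf_mem {AL : Subalgebra ℝ (MState d L Sig → ℝ)}
    (hF1 : ∀ x : Torus d L, site f1 x ∈ AL) (hF2 : ∀ x : Torus d L, site f2 x ∈ AL)
    (j : Fin d) (w : Torus d L) : Vf f1 f2 j w ∈ AL := by
  rw [Vf_eq]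
  exact mul_mem (hF2 w) (prod_mem (fun z _ => hF1 z))

lemma Vf_domain (j : Fin d) {w : Torus d L} (hw : w ∈ posHalf d L j 1) :
    HasDomain (Vf f1 f2 j w) ↑(posHalf d L j 1) := by
  intro ω₁ ω₂ h
  unfold Vf
  rw [h w hw]
  congr 1
  refine Finset.prod_congr rfl (fun z hz => ?_)
  rw [h z (Finset.mem_of_mem_erase hz)]

lemma Vf_mul_reflect (hL : Even L) (j : Fin d) {u v : Torus d L}
    (hu : u ∈ posHalf d L j 1) (hv : v ∈ posHalf d L j 1) :
    (Vf f1 f2 j u) * reflectFun j 1 (Vf f1 f2 j v) =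
      fun ω => f2 (ω u) * f2 (ω (reflect j 1 v)) *
        ∏ z ∈ (Finset.univ.erase u).erase (reflect j 1 v), f1 (ω z) := by
  funext ω
  have hP : (posHalf d L j 1) ∪ (posHalf d L j 1).image (reflect j 1) = Finset.univ :=
    union_posHalf_reflect hL j
  show (Vf f1 f2 j u ω) * (Vf f1 f2 j v (fun x => ω (reflect j 1 x))) = _
  unfold Vf
  dsimp only
  have h2 : ∏ z ∈ (posHalf d L j 1).erase v, f1 (ω (reflect j 1 z)) =
      ∏ z ∈ ((posHalf d L j 1).erase v).image (reflect j 1), f1 (ω z) := by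
    rw [Finset.prod_image (fun a _ b _ h => reflect_injective j 1 h)]
  have h3 : ((posHalf d L j 1).erase v).image (reflect j 1) =
      ((posHalf d L j 1).image (reflect j 1)).erase (reflect j 1 v) := by
    rw [Finset.image_erase (reflect_injective j 1)]
  have hdisj : Disjoint ((posHalf d L j 1).erase u)
      (((posHalf d L j 1).image (reflect j 1)).erase (reflect j 1 v)) := by
    apply Finset.disjoint_of_subset_left (Finset.erase_subset _ _)
    apply Finset.disjoint_of_subset_right (Finset.erase_subset _ _)
    rw [Finset.disjoint_right]
    intro a ha ha'
    obtain ⟨b, hb, rfl⟩ := Finset.mem_image.mp ha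
    exact not_mem_posHalf_reflect hL hb ha'
  have hunion : ((posHalf d L j 1).erase u) ∪
      (((posHalf d L j 1).image (reflect j 1)).erase (reflect j 1 v)) =
      (Finset.univ.erase u).erase (reflect j 1 v) := by
    ext z
    simp only [Finset.mem_union, Finset.mem_erase, Finset.mem_univ, and_true]
    have hrv : reflect j 1 v ∉ posHalf d L j 1 := not_mem_posHalf_reflect hL hv
    have hui : u ∉ (posHalf d L j 1).image (reflect j 1) := by
      intro hc
      obtain ⟨b, hb, hbe⟩ := Finset.mem_image.mp hc
      exact not_mem_posHalf_reflect hL hb (hbe ▸ hu)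
    constructor
    · rintro (⟨hzu, hz⟩ | ⟨hzv, hz⟩)
      · exact ⟨fun h => hrv (h ▸ hz), hzu⟩
      · exact ⟨hzv, fun h => hui (h ▸ hz)⟩
    · rintro ⟨hzv, hzu⟩
      have hz : z ∈ (posHalf d L j 1) ∪ (posHalf d L j 1).image (reflect j 1) := by
        rw [hP]; exact Finset.mem_univ z
      rcases Finset.mem_union.mp hz with h | h
      · exact Or.inl ⟨hzu, h⟩
      · exact Or.inr ⟨hzv, h⟩
  calc (f2 (ω u) * ∏ z ∈ (posHalf d L j 1).erase u, f1 (ω z)) *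
        (f2 (ω (reflect j 1 v)) * ∏ z ∈ (posHalf d L j 1).erase v, f1 (ω (reflect j 1 z)))
      = f2 (ω u) * f2 (ω (reflect j 1 v)) *
        ((∏ z ∈ (posHalf d L j 1).erase u, f1 (ω z)) *
         ∏ z ∈ (((posHalf d L j 1).image (reflect j 1)).erase (reflect j 1 v)), f1 (ω z)) := by
        rw [h2, h3]; ring
    _ = _ := by rw [← Finset.prod_union hdisj, hunion]

end Alg

section Gram
variable {d L : ℕ} [NeZero L] {Sig : Type*}
variable {AL : Subalgebra ℝ (MState d L Sig → ℝ)} (phi : (MState d L Sig → ℝ) →ₗ[ℝ] ℝ)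
variable (f1 f2 : Sig → ℝ)

lemma phi_Vf_mul (hL : Even L) (j : Fin d) {u v : Torus d L}
    (hu : u ∈ posHalf d L j 1) (hv : v ∈ posHalf d L j 1) :
    phi (Vf f1 f2 j u * reflectFun j 1 (Vf f1 f2 j v)) =
      twoPoint phi f1 f2 u (reflect j 1 v) := by
  rw [Vf_mul_reflect f1 f2 hL j hu hv]
  rfl

lemma reflectFun_sum {ι : Type*} (S : Finset ι) (g : ι → MState d L Sig → ℝ) (j : Fin d) (t : ℕ) :
    reflectFun j t (∑ a ∈ S, g a) = ∑ a ∈ S, reflectFun j t (g a) := by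
  funext ω
  simp [reflectFun, Finset.sum_apply]

lemma reflectFun_smul (c : ℝ) (A : MState d L Sig → ℝ) (j : Fin d) (t : ℕ) :
    reflectFun j t (c • A) = c • reflectFun j t A := by
  funext ω
  simp [reflectFun]

/-- The master Gram positivity inequality. -/
lemma gram (hL : Even L) (hRPe : RPEdges AL phi)
    (hF1 : ∀ x : Torus d L, site f1 x ∈ AL) (hF2 : ∀ x : Torus d L, site f2 x ∈ AL)
    (j : Fin d) {ι : Type*} (S : Finset ι) (c : ι → ℝ) (w : ι → Torus d L)
    (hw : ∀ a ∈ S, w a ∈ posHalf d L j 1) :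
    0 ≤ ∑ a ∈ S, ∑ b ∈ S, c a * c b * twoPoint phi f1 f2 (w a) (reflect j 1 (w b)) := by
  classical
  set X : MState d L Sig → ℝ := ∑ a ∈ S, c a • Vf f1 f2 j (w a) with hX
  have hmem : X ∈ AL :=
    sum_mem (fun a _ => Subalgebra.smul_mem _ (Vf_mem f1 f2 hF1 hF2 j (w a)) _)
  have hdom : HasDomain X ↑(posHalf d L j 1) := by
    intro ω₁ ω₂ h
    simp only [hX, Finset.sum_apply, Pi.smul_apply, smul_eq_mul]
    refine Finset.sum_congr rfl (fun a ha => ?_)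
    rw [Vf_domain f1 f2 j (hw a ha) ω₁ ω₂ h]
  have hpos := (hRPe j 1 (by have := Nat.pos_of_ne_zero (NeZero.ne L); omega) rfl
    X X hmem hmem hdom hdom).2
  have hexp : X * reflectFun j 1 X =
      ∑ a ∈ S, ∑ b ∈ S, (c a * c b) •
        (Vf f1 f2 j (w a) * reflectFun j 1 (Vf f1 f2 j (w b))) := by
    rw [hX, reflectFun_sum, Finset.sum_mul_sum]
    refine Finset.sum_congr rfl fun a _ => Finset.sum_congr rfl fun b _ => ?_
    rw [reflectFun_smul]
    rw [smul_mul_smul_comm]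
  rw [hexp] at hpos
  rw [map_sum] at hpos
  simp only [map_sum, map_smul, smul_eq_mul] at hpos
  calc (0:ℝ) ≤ _ := hpos
    _ = _ := by
        refine Finset.sum_congr rfl fun a ha => Finset.sum_congr rfl fun b hb => ?_
        rw [phi_Vf_mul phi f1 f2 hL j (hw a ha) (hw b hb)]

end Gram

section Translate
variable {d L : ℕ} [NeZero L] {Sig : Type*}
variable (phi : (MState d L Sig → ℝ) →ₗ[ℝ] ℝ) (f1 f2 : Sig → ℝ)

lemma twoPoint_comm (x y : Torus d L) :
    twoPoint phi f1 f2 x y = twoPoint phi f1 f2 y x := by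
  unfold twoPoint
  congr 1
  funext ω
  rw [Finset.erase_right_comm]
  ring

lemma twoPoint_eq_form {x y : Torus d L} (hxy : x ≠ y) :
    twoPoint phi f1 f2 x y =
      phi (fun w => (∏ a ∈ (Finset.univ.erase x).erase y, f1 (w a)) *
        ∏ b ∈ ({x, y} : Finset (Torus d L)), f2 (w b)) := by
  unfold twoPoint
  congr 1
  funext ω
  rw [Finset.prod_pair hxy]
  ring

lemma image_addRight_erase (s : Finset (Torus d L)) (a z : Torus d L) :
    (s.erase a).image (· + z) = (s.image (· + z)).erase (a + z) :=
  Finset.image_erase (fun u v h => by simpa using h) s a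

lemma twoPoint_shift (hsym : TorusSymmetric phi f1 f2) {x y : Torus d L} (hxy : x ≠ y)
    (z : Torus d L) :
    twoPoint phi f1 f2 x y = twoPoint phi f1 f2 (x + z) (y + z) := by
  have hinj : Function.Injective (fun u : Torus d L => u + z) :=
    fun u v h => by simpa using h
  have hxy' : x + z ≠ y + z := fun h => hxy (by simpa using hinj h)
  rw [twoPoint_eq_form phi f1 f2 hxy, twoPoint_eq_form phi f1 f2 hxy']
  rw [hsym ((Finset.univ.erase x).erase y) ({x, y} : Finset (Torus d L)) z]
  congr 1
  funext ω
  have h1 : ∏ a ∈ (Finset.univ.erase x).erase y, f1 (ω (a + z)) =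
      ∏ a ∈ ((Finset.univ.erase x).erase y).image (· + z), f1 (ω a) := by
    rw [Finset.prod_image (fun u _ v _ h => hinj h)]
  have h2 : ∏ b ∈ ({x, y} : Finset (Torus d L)), f2 (ω (b + z)) =
      ∏ b ∈ ({x, y} : Finset (Torus d L)).image (· + z), f2 (ω b) := by
    rw [Finset.prod_image (fun u _ v _ h => hinj h)]
  have h3 : ((Finset.univ.erase x).erase y).image (· + z) =
      (Finset.univ.erase (x + z)).erase (y + z) := by
    rw [image_addRight_erase, image_addRight_erase]
    congr 2
    apply Finset.image_univ_of_surjective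
    intro u
    exact ⟨u - z, by ring⟩
  have h4 : ({x, y} : Finset (Torus d L)).image (· + z) = {x + z, y + z} := by
    rw [Finset.image_insert, Finset.image_singleton]
  rw [h1, h2, h3, h4]

lemma twoPoint_zero (hsym : TorusSymmetric phi f1 f2) {x y : Torus d L} (hxy : x ≠ y) :
    twoPoint phi f1 f2 x y = twoPoint phi f1 f2 0 (y - x) := by
  have := twoPoint_shift phi f1 f2 hsym hxy (-x)
  rw [this]
  congr 1
  · ring
  · ring

lemma tg_neg (hsym : TorusSymmetric phi f1 f2) (z : Torus d L) :
    twoPoint phi f1 f2 0 (-z) = twoPoint phi f1 f2 0 z := by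
  by_cases hz : z = 0
  · subst hz; norm_num
  · have h1 : (0 : Torus d L) ≠ -z := by
      intro h
      exact hz (by have := congrArg Neg.neg h; simpa using this.symm)
    rw [twoPoint_comm phi f1 f2 0 (-z), twoPoint_zero phi f1 f2 hsym (Ne.symm h1)]
    norm_num

end Translate

section Keys
variable {d L : ℕ} [NeZero L] {Sig : Type*}
variable (phi : (MState d L Sig → ℝ) →ₗ[ℝ] ℝ) (f1 f2 : Sig → ℝ)

def mkp {d L : ℕ} (j : Fin d) (c : ZMod L) (w : Torus d L) : Torus d L := Function.update w j c

@[simp] lemma mkp_self (j : Fin d) (c : ZMod L) (w : Torus d L) : mkp j c w j = c := by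
  simp [mkp]

lemma mkp_ne {j i : Fin d} (c : ZMod L) (w : Torus d L) (h : i ≠ j) : mkp j c w i = w i := by
  simp [mkp, Function.update_of_ne h]

lemma mkp_eq_self (j : Fin d) (z : Torus d L) : mkp j (z j) z = z :=
  Function.update_eq_self j z

/-- the point at level `1 + i` over the perp position `p` -/
def ptt {d L : ℕ} (j : Fin d) (i : ℕ) (p : Torus d L) : Torus d L :=
  mkp j ((1 + i : ℕ) : ZMod L) p

lemma ptt_mem {j : Fin d} {i : ℕ} (hi : i < L / 2) (p : Torus d L) :
    ptt j i p ∈ posHalf d L j 1 := by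
  have hL : 0 < L := Nat.pos_of_ne_zero (NeZero.ne L)
  rw [mem_posHalf_one]
  have h1 : ptt j i p j - 1 = ((i : ℕ) : ZMod L) := by
    rw [ptt, mkp_self]; push_cast; ring
  rw [h1, ZMod.val_cast_of_lt (by omega)]
  exact hi

/-- the normalized Gram entry: `tg` at the point with coordinate `-(1+σ)` along `j`
and perp offset `w` (the `j`-coordinate of `w` is overwritten). -/
noncomputable def gE (j : Fin d) (σ : ℕ) (w : Torus d L) : ℝ :=
  twoPoint phi f1 f2 0 (mkp j (-((1 + σ : ℕ) : ZMod L)) w)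

lemma twoPoint_ptt (hL : Even L) (hsym : TorusSymmetric phi f1 f2) {j : Fin d} {i i' : ℕ}
    (hi : i < L / 2) (hi' : i' < L / 2) (p q : Torus d L) :
    twoPoint phi f1 f2 (ptt j i p) (reflect j 1 (ptt j i' q)) =
      gE phi f1 f2 j (i + i') (q - p) := by
  have hne : ptt j i p ≠ reflect j 1 (ptt j i' q) :=
    ne_reflect_of_mem hL (ptt_mem hi p) (ptt_mem hi' q)
  rw [twoPoint_zero phi f1 f2 hsym hne]
  unfold gE
  congr 1
  funext co
  by_cases h : co = j
  · subst h
    simp only [Pi.sub_apply, reflect_apply_self, ptt, mkp_self]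
    push_cast
    ring
  · simp only [Pi.sub_apply, reflect_apply_ne _ h, ptt, mkp_ne _ _ h]

/-- instantiated master Gram inequality -/
lemma gram2 {AL : Subalgebra ℝ (MState d L Sig → ℝ)} (hL : Even L) (hRPe : RPEdges AL phi)
    (hF1 : ∀ x : Torus d L, site f1 x ∈ AL) (hF2 : ∀ x : Torus d L, site f2 x ∈ AL)
    (hsym : TorusSymmetric phi f1 f2) (j : Fin d) {ι : Type*} (S : Finset ι) (c : ι → ℝ)
    (lev : ι → ℕ) (off : ι → Torus d L) (hlev : ∀ a ∈ S, lev a < L / 2) :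
    0 ≤ ∑ a ∈ S, ∑ b ∈ S, c a * c b * gE phi f1 f2 j (lev a + lev b) (off b - off a) := by
  have h := gram phi f1 f2 hL hRPe hF1 hF2 j S c (fun a => ptt j (lev a) (off a))
    (fun a ha => ptt_mem (hlev a ha) _)
  calc (0:ℝ) ≤ _ := h
    _ = _ := by
      refine Finset.sum_congr rfl fun a ha => Finset.sum_congr rfl fun b hb => ?_
      rw [twoPoint_ptt phi f1 f2 hL hsym (hlev a ha) (hlev b hb)]

/-- the basic cross symmetry, from the equality part of reflection positivity -/
lemma gE_neg {AL : Subalgebra ℝ (MState d L Sig → ℝ)} (hL : Even L) (hRPe : RPEdges AL phi)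
    (hF1 : ∀ x : Torus d L, site f1 x ∈ AL) (hF2 : ∀ x : Torus d L, site f2 x ∈ AL)
    (hsym : TorusSymmetric phi f1 f2) (j : Fin d) {σ : ℕ} (hσ : σ + 2 ≤ L) (w : Torus d L) :
    gE phi f1 f2 j σ (-w) = gE phi f1 f2 j σ w := by
  have hL2 : L / 2 + L / 2 = L := by obtain ⟨m, rfl⟩ := hL; omega
  set i := σ / 2 with hidef
  set i' := σ - σ / 2 with hi'def
  have hii' : i + i' = σ := by omega
  have hi : i < L / 2 := by omega
  have hi' : i' < L / 2 := by omega
  have h1 := twoPoint_ptt phi f1 f2 hL hsym (j := j) hi hi' w 0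
  have h2 := twoPoint_ptt phi f1 f2 hL hsym (j := j) hi' hi 0 w
  have hsw := (hRPe j 1 (by have := Nat.pos_of_ne_zero (NeZero.ne L); omega) rfl
    (Vf f1 f2 j (ptt j i w)) (Vf f1 f2 j (ptt j i' 0))
    (Vf_mem f1 f2 hF1 hF2 j _) (Vf_mem f1 f2 hF1 hF2 j _)
    (Vf_domain f1 f2 j (ptt_mem hi w)) (Vf_domain f1 f2 j (ptt_mem hi' 0))).1
  rw [phi_Vf_mul phi f1 f2 hL j (ptt_mem hi w) (ptt_mem hi' 0),
    phi_Vf_mul phi f1 f2 hL j (ptt_mem hi' 0) (ptt_mem hi w)] at hsw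
  rw [h1] at hsw
  rw [h2] at hsw
  have e1 : (0:Torus d L) - w = -w := by ring
  have e2 : w - 0 = w := by ring
  rw [e1] at hsw
  rw [e2] at hsw
  rw [Nat.add_comm i' i] at hsw
  rw [← hii']
  exact hsw

lemma tg_le_M {M : ℝ} (hbd : ∀ x y : Torus d L, twoPoint phi f1 f2 x y ≤ M) (z : Torus d L) :
    twoPoint phi f1 f2 0 z ≤ M := hbd 0 z

lemma gE_le_M {M : ℝ} (hbd : ∀ x y : Torus d L, twoPoint phi f1 f2 x y ≤ M)
    (j : Fin d) (σ : ℕ) (w : Torus d L) : gE phi f1 f2 j σ w ≤ M := hbd _ _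

/-- the crude lower bound `tg z ≥ -M` for points off the `j = 0` hyperplane -/
lemma tg_ge {AL : Subalgebra ℝ (MState d L Sig → ℝ)} (hL : Even L) (hRPe : RPEdges AL phi)
    (hF1 : ∀ x : Torus d L, site f1 x ∈ AL) (hF2 : ∀ x : Torus d L, site f2 x ∈ AL)
    (hsym : TorusSymmetric phi f1 f2) {M : ℝ}
    (hbd : ∀ x y : Torus d L, twoPoint phi f1 f2 x y ≤ M)
    {j : Fin d} {z : Torus d L} (hz : z j ≠ 0) :
    -M ≤ twoPoint phi f1 f2 0 z := by
  have hLpos : 0 < L := Nat.pos_of_ne_zero (NeZero.ne L)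
  have hL2 : L / 2 + L / 2 = L := by obtain ⟨m, rfl⟩ := hL; omega
  set b := (z j).val with hbdef
  have hb0 : b ≠ 0 := fun h => hz ((ZMod.val_eq_zero _).mp h)
  have hbL : b < L := ZMod.val_lt _
  set σ := L - 1 - b with hσdef
  have hσ2 : σ + 2 ≤ L := by omega
  have hkey : mkp j (-((1 + σ : ℕ) : ZMod L)) z = z := by
    have h1 : ((1 + σ : ℕ) : ZMod L) = -(z j) := by
      have e1 : ((1 + σ : ℕ) : ZMod L) + ((b : ℕ) : ZMod L) = 0 := by
        have : ((1 + σ + b : ℕ) : ZMod L) = ((L : ℕ) : ZMod L) := by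
          congr 1
          omega
        rw [ZMod.natCast_self] at this
        push_cast at this ⊢
        linear_combination this
      have e2 : ((b : ℕ) : ZMod L) = z j := by
        rw [hbdef, ZMod.natCast_val, ZMod.cast_id]
      rw [e2] at e1
      linear_combination e1
    rw [h1, neg_neg, mkp_eq_self]
  set i := σ / 2 with hidef
  set i' := σ - σ / 2 with hi'def
  have hii' : i + i' = σ := by omega
  have hi : i < L / 2 := by omega
  have hi' : i' < L / 2 := by omega
  have hgram := gram2 phi f1 f2 hL hRPe hF1 hF2 hsym j (Finset.univ : Finset Bool)
    (fun b => if b then 1 else 1) (fun b => if b then i' else i) (fun b => if b then z else 0)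
    (by intro a _; by_cases h : a <;> simp [h, hi, hi'])
  rw [Fintype.sum_bool] at hgram
  rw [Fintype.sum_bool, Fintype.sum_bool] at hgram
  simp only [Bool.false_eq_true, eq_self_iff_true, if_true, if_false] at hgram
  have hzz : z - z = 0 := by ring
  have hz0 : z - 0 = z := by ring
  have h0z : (0:Torus d L) - z = -z := by ring
  have h00 : (0:Torus d L) - 0 = 0 := by ring
  rw [hzz, hz0, h0z, h00] at hgram
  have hneg : gE phi f1 f2 j (i' + i) (-z) = gE phi f1 f2 j σ z := by
    rw [gE_neg phi f1 f2 hL hRPe hF1 hF2 hsym j (by omega), Nat.add_comm i' i, hii']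
  rw [hneg] at hgram
  have hcross : gE phi f1 f2 j (i + i') z = twoPoint phi f1 f2 0 z := by
    rw [hii']
    unfold gE
    rw [hkey]
  have hcross2 : gE phi f1 f2 j σ z = twoPoint phi f1 f2 0 z := by
    unfold gE; rw [hkey]
  rw [hcross, hcross2] at hgram
  have hE1 : gE phi f1 f2 j (i' + i') 0 ≤ M := gE_le_M phi f1 f2 hbd j _ 0
  have hE2 : gE phi f1 f2 j (i + i) 0 ≤ M := gE_le_M phi f1 f2 hbd j _ 0
  nlinarith [hgram]

end Keys

section Lam
variable {d L : ℕ} [NeZero L] {Sig : Type*}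
variable (phi : (MState d L Sig → ℝ) →ₗ[ℝ] ℝ) (f1 f2 : Sig → ℝ)
variable {Λ : Finset (Torus d L)}

/-- subgroup closure assumptions -/
def SubgroupLike (Λ : Finset (Torus d L)) : Prop :=
  (0 : Torus d L) ∈ Λ ∧ (∀ r ∈ Λ, -r ∈ Λ) ∧ (∀ r ∈ Λ, ∀ s ∈ Λ, r + s ∈ Λ)

lemma SubgroupLike.sub_mem {Λ : Finset (Torus d L)} (h : SubgroupLike Λ)
    {r s : Torus d L} (hr : r ∈ Λ) (hs : s ∈ Λ) : r - s ∈ Λ := by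
  rw [sub_eq_add_neg]
  exact h.2.2 r hr (-s) (h.2.1 s hs)

lemma sum_shift_sub (h : SubgroupLike Λ) {t : Torus d L} (ht : t ∈ Λ) (F : Torus d L → ℝ) :
    ∑ r ∈ Λ, F (t - r) = ∑ r ∈ Λ, F r := by
  refine Finset.sum_equiv (Equiv.subLeft t) (fun r => ?_) (fun r _ => rfl)
  constructor
  · intro hr
    exact h.sub_mem ht hr
  · intro hr
    have : t - (t - r) ∈ Λ := h.sub_mem ht hr
    simpa using this

lemma sum_sub_right (h : SubgroupLike Λ) {t : Torus d L} (ht : t ∈ Λ) (F : Torus d L → ℝ) :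
    ∑ r ∈ Λ, F (r - t) = ∑ r ∈ Λ, F r := by
  refine Finset.sum_equiv (Equiv.subRight t) (fun r => ?_) (fun r _ => rfl)
  constructor
  · intro hr
    exact h.sub_mem hr ht
  · intro hr
    have : (r - t) + t ∈ Λ := h.2.2 _ hr t ht
    simpa using this

lemma sum_neg_arg (h : SubgroupLike Λ) (F : Torus d L → ℝ) :
    ∑ r ∈ Λ, F (-r) = ∑ r ∈ Λ, F r := by
  refine Finset.sum_equiv (Equiv.neg _) (fun r => ?_) (fun r _ => rfl)
  constructor
  · intro hr
    exact h.2.1 r hr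
  · intro hr
    have := h.2.1 _ hr
    simpa using this

lemma sum_sum_sub (h : SubgroupLike Λ) (F : Torus d L → ℝ) :
    ∑ r ∈ Λ, ∑ q ∈ Λ, F (q - r) = (Λ.card : ℝ) * ∑ r ∈ Λ, F r := by
  have hh : ∀ r ∈ Λ, ∑ q ∈ Λ, F (q - r) = ∑ q ∈ Λ, F q := fun r hr => sum_sub_right h hr F
  rw [Finset.sum_congr rfl hh, Finset.sum_const, nsmul_eq_mul]

/-- generic 2x2 block split for double sums over a disjoint sum -/
lemma sum_disjSum_split {ι₁ ι₂ : Type*} (S₁ : Finset ι₁) (S₂ : Finset ι₂)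
    (G : ι₁ ⊕ ι₂ → ι₁ ⊕ ι₂ → ℝ) :
    ∑ x ∈ S₁.disjSum S₂, ∑ y ∈ S₁.disjSum S₂, G x y =
      ((∑ a ∈ S₁, ∑ b ∈ S₁, G (.inl a) (.inl b)) + ∑ a ∈ S₁, ∑ b ∈ S₂, G (.inl a) (.inr b))
      + ((∑ a ∈ S₂, ∑ b ∈ S₁, G (.inr a) (.inl b)) + ∑ a ∈ S₂, ∑ b ∈ S₂, G (.inr a) (.inr b)) := by
  rw [Finset.sum_disjSum]
  congr 1
  · rw [← Finset.sum_add_distrib]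
    exact Finset.sum_congr rfl fun a _ => Finset.sum_disjSum _ _ _
  · rw [← Finset.sum_add_distrib]
    exact Finset.sum_congr rfl fun a _ => Finset.sum_disjSum _ _ _

/-- slab sums -/
noncomputable def WG (Λ : Finset (Torus d L)) (j : Fin d) (σ : ℕ) : ℝ :=
  ∑ r ∈ Λ, gE phi f1 f2 j σ r

lemma card_pos_of_subgroupLike (h : SubgroupLike Λ) : 0 < Λ.card :=
  Finset.card_pos.mpr ⟨0, h.1⟩

variable {AL : Subalgebra ℝ (MState d L Sig → ℝ)}

/-- positivity of slab sums at diagonal indices -/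
lemma key0 (hL : Even L) (hRPe : RPEdges AL phi)
    (hF1 : ∀ x : Torus d L, site f1 x ∈ AL) (hF2 : ∀ x : Torus d L, site f2 x ∈ AL)
    (hsym : TorusSymmetric phi f1 f2) (h : SubgroupLike Λ) (j : Fin d) {i : ℕ} (hi : i < L / 2) :
    0 ≤ WG phi f1 f2 Λ j (i + i) := by
  have hg := gram2 phi f1 f2 hL hRPe hF1 hF2 hsym j Λ (fun _ => 1) (fun _ => i) id
    (fun a _ => hi)
  simp only [one_mul, id] at hg
  rw [sum_sum_sub h (gE phi f1 f2 j (i + i))] at hg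
  have hc : (0:ℝ) < Λ.card := by exact_mod_cast card_pos_of_subgroupLike h
  unfold WG
  nlinarith [hg, hc]

lemma sum_sum_const_mul {α β : Type*} (s : Finset α) (t' : Finset β) (u v : ℝ) (F : α → β → ℝ) :
    ∑ a ∈ s, ∑ b ∈ t', u * v * F a b = u * v * ∑ a ∈ s, ∑ b ∈ t', F a b := by
  rw [Finset.mul_sum]
  exact Finset.sum_congr rfl fun a _ => by rw [Finset.mul_sum]

lemma sum_const_mul {α : Type*} (s : Finset α) (u v : ℝ) (F : α → ℝ) :
    ∑ a ∈ s, u * v * F a = u * v * ∑ a ∈ s, F a := by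
  rw [Finset.mul_sum]

/-- Cauchy–Schwarz for slab sums -/
lemma keyCS (hL : Even L) (hRPe : RPEdges AL phi)
    (hF1 : ∀ x : Torus d L, site f1 x ∈ AL) (hF2 : ∀ x : Torus d L, site f2 x ∈ AL)
    (hsym : TorusSymmetric phi f1 f2) (h : SubgroupLike Λ) (j : Fin d) {i i' : ℕ}
    (hi : i < L / 2) (hi' : i' < L / 2) :
    (WG phi f1 f2 Λ j (i + i'))^2 ≤ WG phi f1 f2 Λ j (i + i) * WG phi f1 f2 Λ j (i' + i') := by
  have hc : (0:ℝ) < Λ.card := by exact_mod_cast card_pos_of_subgroupLike h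
  have hq : ∀ t : ℝ, 0 ≤ WG phi f1 f2 Λ j (i' + i') * (t * t) +
      (2 * WG phi f1 f2 Λ j (i + i')) * t + WG phi f1 f2 Λ j (i + i) := by
    intro t
    have hg := gram2 phi f1 f2 hL hRPe hF1 hF2 hsym j (Λ.disjSum Λ)
      (Sum.elim (fun _ => 1) (fun _ => t)) (Sum.elim (fun _ => i) (fun _ => i'))
      (Sum.elim id id)
      (by rintro (a | a) _
          · exact hi
          · exact hi')
    rw [sum_disjSum_split] at hg
    simp only [Sum.elim_inl, Sum.elim_inr, id] at hg
    rw [sum_sum_const_mul Λ Λ 1 1, sum_sum_const_mul Λ Λ 1 t, sum_sum_const_mul Λ Λ t 1,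
      sum_sum_const_mul Λ Λ t t] at hg
    rw [sum_sum_sub h (gE phi f1 f2 j (i + i)), sum_sum_sub h (gE phi f1 f2 j (i + i')),
      sum_sum_sub h (gE phi f1 f2 j (i' + i)), sum_sum_sub h (gE phi f1 f2 j (i' + i'))] at hg
    rw [Nat.add_comm i' i] at hg
    have hWG : ∀ k, WG phi f1 f2 Λ j k = ∑ r ∈ Λ, gE phi f1 f2 j k r := fun _ => rfl
    rw [← hWG, ← hWG, ← hWG] at hg
    nlinarith [hg, hc]
  have hd := discrim_le_zero hq
  unfold discrim at hd
  nlinarith [hd]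

/-- the odd anchor inequality -/
lemma key1 (hL : Even L) (hRPe : RPEdges AL phi)
    (hF1 : ∀ x : Torus d L, site f1 x ∈ AL) (hF2 : ∀ x : Torus d L, site f2 x ∈ AL)
    (hsym : TorusSymmetric phi f1 f2) (h : SubgroupLike Λ) (j : Fin d) {i : ℕ}
    (hi : i < L / 2) {w₀ : Torus d L} (hw : w₀ ∈ Λ) :
    2 * WG phi f1 f2 Λ j (i + i) ≤
      (Λ.card : ℝ) * (gE phi f1 f2 j (i + i) 0 + gE phi f1 f2 j (i + i) w₀) := by
  classical
  have hc : (0:ℝ) < Λ.card := by exact_mod_cast card_pos_of_subgroupLike h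
  have hL2 : L / 2 + L / 2 = L := by obtain ⟨m, rfl⟩ := hL; omega
  set t : ℝ := -((Λ.card : ℝ) / 2) with ht
  have hg := gram2 phi f1 f2 hL hRPe hF1 hF2 hsym j (Λ.disjSum (Finset.univ : Finset Bool))
    (Sum.elim (fun _ => 1) (fun _ => t)) (Sum.elim (fun _ => i) (fun _ => i))
    (Sum.elim id (fun b => if b then w₀ else 0))
    (by rintro (a | a) _
        · exact hi
        · exact hi)
  rw [sum_disjSum_split] at hg
  simp only [Sum.elim_inl, Sum.elim_inr, id] at hg
  have e11 : ∑ a ∈ Λ, ∑ b ∈ Λ, (1:ℝ) * 1 * gE phi f1 f2 j (i + i) (b - a)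
      = (Λ.card : ℝ) * WG phi f1 f2 Λ j (i + i) := by
    rw [sum_sum_const_mul Λ Λ 1 1, sum_sum_sub h (gE phi f1 f2 j (i + i))]
    rw [show WG phi f1 f2 Λ j (i + i) = ∑ r ∈ Λ, gE phi f1 f2 j (i+i) r from rfl]
    ring
  have e12 : ∑ a ∈ Λ, ∑ b ∈ (Finset.univ : Finset Bool), (1:ℝ) * t *
      gE phi f1 f2 j (i + i) ((if b then w₀ else 0) - a)
      = t * (2 * WG phi f1 f2 Λ j (i + i)) := by
    rw [Finset.sum_comm, Fintype.sum_bool]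
    simp only [Bool.false_eq_true, eq_self_iff_true, if_true, if_false]
    rw [sum_const_mul Λ 1 t, sum_const_mul Λ 1 t]
    rw [sum_shift_sub h hw (gE phi f1 f2 j (i + i))]
    rw [sum_shift_sub h h.1 (gE phi f1 f2 j (i + i))]
    rw [show WG phi f1 f2 Λ j (i + i) = ∑ r ∈ Λ, gE phi f1 f2 j (i+i) r from rfl]
    ring
  have e21 : ∑ a ∈ (Finset.univ : Finset Bool), ∑ b ∈ Λ, t * 1 *
      gE phi f1 f2 j (i + i) (b - (if a then w₀ else 0))
      = t * (2 * WG phi f1 f2 Λ j (i + i)) := by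
    rw [Fintype.sum_bool]
    simp only [Bool.false_eq_true, eq_self_iff_true, if_true, if_false]
    rw [sum_const_mul Λ t 1, sum_const_mul Λ t 1]
    rw [sum_sub_right h hw (gE phi f1 f2 j (i + i))]
    rw [sum_sub_right h h.1 (gE phi f1 f2 j (i + i))]
    rw [show WG phi f1 f2 Λ j (i + i) = ∑ r ∈ Λ, gE phi f1 f2 j (i+i) r from rfl]
    ring
  have e22 : ∑ a ∈ (Finset.univ : Finset Bool), ∑ b ∈ (Finset.univ : Finset Bool), t * t *
      gE phi f1 f2 j (i + i) ((if b then w₀ else 0) - (if a then w₀ else 0))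
      = t * t * (2 * gE phi f1 f2 j (i + i) 0 + 2 * gE phi f1 f2 j (i + i) w₀) := by
    rw [Fintype.sum_bool, Fintype.sum_bool, Fintype.sum_bool]
    simp only [Bool.false_eq_true, eq_self_iff_true, if_true, if_false]
    have c1 : w₀ - w₀ = (0 : Torus d L) := by ring
    have c2 : w₀ - 0 = w₀ := by ring
    have c3 : (0:Torus d L) - w₀ = -w₀ := by ring
    have c4 : (0:Torus d L) - 0 = 0 := by ring
    rw [c1, c2, c3, c4]
    rw [gE_neg phi f1 f2 hL hRPe hF1 hF2 hsym j (by omega) w₀]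
    ring
  rw [e11, e12, e21, e22] at hg
  rw [ht] at hg
  nlinarith [hg, hc]

end Lam

section Lam2
variable {d L : ℕ} [NeZero L] {Sig : Type*}
variable (phi : (MState d L Sig → ℝ) →ₗ[ℝ] ℝ) (f1 f2 : Sig → ℝ)
variable {Λ : Finset (Torus d L)} {AL : Subalgebra ℝ (MState d L Sig → ℝ)}

lemma sum_disjSum_split3 {ι₁ ι₂ ι₃ : Type*} (S₁ : Finset ι₁) (S₂ : Finset ι₂) (S₃ : Finset ι₃)
    (G : (ι₁ ⊕ ι₂) ⊕ ι₃ → (ι₁ ⊕ ι₂) ⊕ ι₃ → ℝ) :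
    ∑ x ∈ (S₁.disjSum S₂).disjSum S₃, ∑ y ∈ (S₁.disjSum S₂).disjSum S₃, G x y =
      (∑ a ∈ S₁, ∑ b ∈ S₁, G (.inl (.inl a)) (.inl (.inl b)))
      + (∑ a ∈ S₁, ∑ b ∈ S₂, G (.inl (.inl a)) (.inl (.inr b)))
      + (∑ a ∈ S₂, ∑ b ∈ S₁, G (.inl (.inr a)) (.inl (.inl b)))
      + (∑ a ∈ S₂, ∑ b ∈ S₂, G (.inl (.inr a)) (.inl (.inr b)))
      + (∑ a ∈ S₁, ∑ b ∈ S₃, G (.inl (.inl a)) (.inr b))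
      + (∑ a ∈ S₂, ∑ b ∈ S₃, G (.inl (.inr a)) (.inr b))
      + (∑ a ∈ S₃, ∑ b ∈ S₁, G (.inr a) (.inl (.inl b)))
      + (∑ a ∈ S₃, ∑ b ∈ S₂, G (.inr a) (.inl (.inr b)))
      + (∑ a ∈ S₃, ∑ b ∈ S₃, G (.inr a) (.inr b)) := by
  rw [sum_disjSum_split]
  rw [sum_disjSum_split S₁ S₂ (fun x y => G (.inl x) (.inl y))]
  rw [Finset.sum_disjSum S₁ S₂ (fun x => ∑ b ∈ S₃, G (.inl x) (.inr b))]
  have h21 : ∑ a ∈ S₃, ∑ y ∈ S₁.disjSum S₂, G (.inr a) (.inl y) =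
      (∑ a ∈ S₃, ∑ b ∈ S₁, G (.inr a) (.inl (.inl b)))
      + ∑ a ∈ S₃, ∑ b ∈ S₂, G (.inr a) (.inl (.inr b)) := by
    rw [← Finset.sum_add_distrib]
    exact Finset.sum_congr rfl fun a _ => Finset.sum_disjSum _ _ _
  rw [h21]
  ring

/-- the even-index master inequality -/
lemma key2 (hL : Even L) (hRPe : RPEdges AL phi)
    (hF1 : ∀ x : Torus d L, site f1 x ∈ AL) (hF2 : ∀ x : Torus d L, site f2 x ∈ AL)
    (hsym : TorusSymmetric phi f1 f2) (h : SubgroupLike Λ) (j : Fin d) {i i' : ℕ}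
    (hi : i < L / 2) (hi' : i' < L / 2) {w₀ : Torus d L} (hw : w₀ ∈ Λ) :
    WG phi f1 f2 Λ j (i + i) + WG phi f1 f2 Λ j (i' + i') + 2 * WG phi f1 f2 Λ j (i + i') ≤
      (Λ.card : ℝ) * (gE phi f1 f2 j (i + i) 0 + gE phi f1 f2 j (i' + i') 0 +
        2 * gE phi f1 f2 j (i + i') w₀) := by
  classical
  have hc : (0:ℝ) < Λ.card := by exact_mod_cast card_pos_of_subgroupLike h
  have hL2 : L / 2 + L / 2 = L := by obtain ⟨m, rfl⟩ := hL; omega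
  set t : ℝ := -(Λ.card : ℝ) with ht
  have hg := gram2 phi f1 f2 hL hRPe hF1 hF2 hsym j
    ((Λ.disjSum Λ).disjSum (Finset.univ : Finset Bool))
    (Sum.elim (Sum.elim (fun _ => 1) (fun _ => 1)) (fun _ => t))
    (Sum.elim (Sum.elim (fun _ => i) (fun _ => i')) (fun b => if b then i' else i))
    (Sum.elim (Sum.elim id id) (fun b => if b then w₀ else 0))
    (by rintro ((a | a) | a) _
        · exact hi
        · exact hi'
        · rcases a
          · exact hi
          · exact hi')
  rw [sum_disjSum_split3] at hg
  simp only [Sum.elim_inl, Sum.elim_inr, id] at hg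
  have hWG : ∀ k, (∑ r ∈ Λ, gE phi f1 f2 j k r) = WG phi f1 f2 Λ j k := fun _ => rfl
  have e1 : ∑ a ∈ Λ, ∑ b ∈ Λ, (1:ℝ) * 1 * gE phi f1 f2 j (i + i) (b - a)
      = (Λ.card : ℝ) * WG phi f1 f2 Λ j (i + i) := by
    rw [sum_sum_const_mul Λ Λ 1 1, sum_sum_sub h (gE phi f1 f2 j (i + i)), hWG]; ring
  have e2 : ∑ a ∈ Λ, ∑ b ∈ Λ, (1:ℝ) * 1 * gE phi f1 f2 j (i + i') (b - a)
      = (Λ.card : ℝ) * WG phi f1 f2 Λ j (i + i') := by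
    rw [sum_sum_const_mul Λ Λ 1 1, sum_sum_sub h (gE phi f1 f2 j (i + i')), hWG]; ring
  have e3 : ∑ a ∈ Λ, ∑ b ∈ Λ, (1:ℝ) * 1 * gE phi f1 f2 j (i' + i) (b - a)
      = (Λ.card : ℝ) * WG phi f1 f2 Λ j (i + i') := by
    rw [sum_sum_const_mul Λ Λ 1 1, sum_sum_sub h (gE phi f1 f2 j (i' + i)),
      Nat.add_comm i' i, hWG]; ring
  have e4 : ∑ a ∈ Λ, ∑ b ∈ Λ, (1:ℝ) * 1 * gE phi f1 f2 j (i' + i') (b - a)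
      = (Λ.card : ℝ) * WG phi f1 f2 Λ j (i' + i') := by
    rw [sum_sum_const_mul Λ Λ 1 1, sum_sum_sub h (gE phi f1 f2 j (i' + i')), hWG]; ring
  have e5 : ∑ a ∈ Λ, ∑ b ∈ (Finset.univ : Finset Bool), (1:ℝ) * t *
      gE phi f1 f2 j (i + (if b then i' else i)) ((if b then w₀ else 0) - a)
      = t * (WG phi f1 f2 Λ j (i + i') + WG phi f1 f2 Λ j (i + i)) := by
    rw [Finset.sum_comm, Fintype.sum_bool]
    simp only [Bool.false_eq_true, eq_self_iff_true, if_true, if_false]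
    rw [sum_const_mul Λ 1 t, sum_const_mul Λ 1 t]
    rw [sum_shift_sub h hw (gE phi f1 f2 j (i + i'))]
    rw [sum_shift_sub h h.1 (gE phi f1 f2 j (i + i))]
    rw [hWG, hWG]; ring
  have e6 : ∑ a ∈ Λ, ∑ b ∈ (Finset.univ : Finset Bool), (1:ℝ) * t *
      gE phi f1 f2 j (i' + (if b then i' else i)) ((if b then w₀ else 0) - a)
      = t * (WG phi f1 f2 Λ j (i' + i') + WG phi f1 f2 Λ j (i + i')) := by
    rw [Finset.sum_comm, Fintype.sum_bool]
    simp only [Bool.false_eq_true, eq_self_iff_true, if_true, if_false]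
    rw [sum_const_mul Λ 1 t, sum_const_mul Λ 1 t]
    rw [sum_shift_sub h hw (gE phi f1 f2 j (i' + i'))]
    rw [sum_shift_sub h h.1 (gE phi f1 f2 j (i' + i))]
    rw [Nat.add_comm i' i, hWG, hWG]; ring
  have e7 : ∑ a ∈ (Finset.univ : Finset Bool), ∑ b ∈ Λ, t * 1 *
      gE phi f1 f2 j ((if a then i' else i) + i) (b - (if a then w₀ else 0))
      = t * (WG phi f1 f2 Λ j (i + i') + WG phi f1 f2 Λ j (i + i)) := by
    rw [Fintype.sum_bool]
    simp only [Bool.false_eq_true, eq_self_iff_true, if_true, if_false]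
    rw [sum_const_mul Λ t 1, sum_const_mul Λ t 1]
    rw [sum_sub_right h hw (gE phi f1 f2 j (i' + i))]
    rw [sum_sub_right h h.1 (gE phi f1 f2 j (i + i))]
    rw [Nat.add_comm i' i, hWG, hWG]; ring
  have e8 : ∑ a ∈ (Finset.univ : Finset Bool), ∑ b ∈ Λ, t * 1 *
      gE phi f1 f2 j ((if a then i' else i) + i') (b - (if a then w₀ else 0))
      = t * (WG phi f1 f2 Λ j (i' + i') + WG phi f1 f2 Λ j (i + i')) := by
    rw [Fintype.sum_bool]
    simp only [Bool.false_eq_true, eq_self_iff_true, if_true, if_false]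
    rw [sum_const_mul Λ t 1, sum_const_mul Λ t 1]
    rw [sum_sub_right h hw (gE phi f1 f2 j (i' + i'))]
    rw [sum_sub_right h h.1 (gE phi f1 f2 j (i + i'))]
    rw [hWG, hWG]; ring
  have e9 : ∑ a ∈ (Finset.univ : Finset Bool), ∑ b ∈ (Finset.univ : Finset Bool), t * t *
      gE phi f1 f2 j ((if a then i' else i) + (if b then i' else i))
        ((if b then w₀ else 0) - (if a then w₀ else 0))
      = t * t * (gE phi f1 f2 j (i + i) 0 + gE phi f1 f2 j (i' + i') 0 +
          2 * gE phi f1 f2 j (i + i') w₀) := by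
    rw [Fintype.sum_bool, Fintype.sum_bool, Fintype.sum_bool]
    simp only [Bool.false_eq_true, eq_self_iff_true, if_true, if_false]
    have c1 : w₀ - w₀ = (0 : Torus d L) := by ring
    have c2 : w₀ - 0 = w₀ := by ring
    have c3 : (0:Torus d L) - w₀ = -w₀ := by ring
    have c4 : (0:Torus d L) - 0 = 0 := by ring
    rw [c1, c2, c3, c4]
    rw [gE_neg phi f1 f2 hL hRPe hF1 hF2 hsym j (by omega : i' + i + 2 ≤ L) w₀]
    rw [Nat.add_comm i' i]
    ring
  rw [e1, e2, e3, e4, e5, e6, e7, e8, e9] at hg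
  rw [ht] at hg
  nlinarith [hg, hc]

end Lam2

section Mono
variable {d L : ℕ} [NeZero L] {Sig : Type*}
variable (phi : (MState d L Sig → ℝ) →ₗ[ℝ] ℝ) (f1 f2 : Sig → ℝ)
variable {Λ : Finset (Torus d L)} {AL : Subalgebra ℝ (MState d L Sig → ℝ)}

lemma neg_mkp (j : Fin d) (c : ZMod L) (w : Torus d L) : -(mkp j c w) = mkp j (-c) (-w) := by
  funext i
  by_cases h : i = j
  · subst h; simp [mkp]
  · simp [mkp, Function.update_of_ne h]

lemma W_symm (hsym : TorusSymmetric phi f1 f2) (h : SubgroupLike Λ) (j : Fin d)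
    {σ : ℕ} (hσ : σ + 2 ≤ L) :
    WG phi f1 f2 Λ j (L - 2 - σ) = WG phi f1 f2 Λ j σ := by
  have hcast : -((1 + (L - 2 - σ) : ℕ) : ZMod L) = ((1 + σ : ℕ) : ZMod L) := by
    have hsum : ((1 + (L - 2 - σ) : ℕ) : ZMod L) + ((1 + σ : ℕ) : ZMod L) = 0 := by
      have : (((1 + (L - 2 - σ)) + (1 + σ) : ℕ) : ZMod L) = ((L : ℕ) : ZMod L) := by
        congr 1
        omega
      rw [ZMod.natCast_self] at this
      push_cast at this ⊢
      linear_combination this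
    linear_combination -hsum
  have hpt : ∀ r : Torus d L, gE phi f1 f2 j (L - 2 - σ) r = gE phi f1 f2 j σ (-r) := by
    intro r
    unfold gE
    rw [hcast]
    rw [← tg_neg phi f1 f2 hsym (mkp j ((1 + σ : ℕ) : ZMod L) r)]
    rw [show -(mkp j ((1 + σ : ℕ) : ZMod L) r) = mkp j (-((1 + σ : ℕ) : ZMod L)) (-r) from
      neg_mkp j _ r]
  unfold WG
  rw [Finset.sum_congr rfl (fun r _ => hpt r)]
  exact sum_neg_arg h (gE phi f1 f2 j σ)

/-- abstract max principle for log-convex-type sequences -/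
lemma maxp (f : ℕ → ℝ) (a b : ℕ) (B : ℝ) (hab : a ≤ b)
    (hnn : ∀ m, a ≤ m → m ≤ b → 0 ≤ f m)
    (hub : ∀ m, a ≤ m → m ≤ b → f m ≤ B)
    (hend : f b = f a)
    (hCS : ∀ m t, a + t ≤ m → m + t ≤ b → (f m)^2 ≤ f (m - t) * f (m + t)) :
    ∀ m, a ≤ m → m ≤ b → f m ≤ f a := by
  have hfa0 : 0 ≤ f a := hnn a le_rfl hab
  have hB0 : 0 ≤ B := le_trans hfa0 (hub a le_rfl hab)
  have hpow : ∀ n : ℕ, ∀ m, a ≤ m → m ≤ b → (f m)^(2^n) ≤ (f a)^(2^n - 1) * B := by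
    intro n
    induction n with
    | zero =>
      intro m hm1 hm2
      simpa using hub m hm1 hm2
    | succ n ih =>
      intro m hm1 hm2
      have hend' : ∀ m', m' = a ∨ m' = b → (f m')^(2^(n+1)) ≤ (f a)^(2^(n+1) - 1) * B := by
        intro m' hm'
        have hfm' : f m' = f a := by rcases hm' with rfl | rfl; rfl; exact hend
        rw [hfm']
        have hrw : (f a)^(2^(n+1)) = (f a)^(2^(n+1) - 1) * f a := by
          rw [← pow_succ]
          congr 1
          have : 0 < 2^(n+1) := Nat.pow_pos (by norm_num)
          omega
        rw [hrw]
        exact mul_le_mul_of_nonneg_left (hub a le_rfl hab) (pow_nonneg hfa0 _)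
      by_cases hma : m = a
      · exact hend' m (Or.inl hma)
      by_cases hmb : m = b
      · exact hend' m (Or.inr hmb)
      set t := min (m - a) (b - m) with htdef
      have h1 : a + t ≤ m := by omega
      have h2 : m + t ≤ b := by omega
      have hCSm := hCS m t h1 h2
      have hin1 : a ≤ m - t ∧ m - t ≤ b := by omega
      have hin2 : a ≤ m + t ∧ m + t ≤ b := by omega
      have hnn1 : 0 ≤ f (m - t) := hnn _ hin1.1 hin1.2
      have hnn2 : 0 ≤ f (m + t) := hnn _ hin2.1 hin2.2
      have hstep : (f m)^(2^(n+1)) ≤ (f (m-t))^(2^n) * (f (m+t))^(2^n) := by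
        have h2n : (f m)^(2^(n+1)) = ((f m)^2)^(2^n) := by
          rw [← pow_mul]
          congr 1
          ring
        rw [h2n, ← mul_pow]
        exact pow_le_pow_left₀ (sq_nonneg _) hCSm _
      have hkey : (f (m-t))^(2^n) * (f (m+t))^(2^n) ≤ (f a)^(2^n) * ((f a)^(2^n - 1) * B) := by
        have hend_eq : m - t = a ∨ m + t = b := by omega
        rcases hend_eq with he | he
        · rw [he]
          exact mul_le_mul_of_nonneg_left (ih _ hin2.1 hin2.2) (pow_nonneg hfa0 _)
        · rw [he, hend]
          rw [mul_comm ((f a)^(2^n)) _]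
          exact mul_le_mul_of_nonneg_right (ih _ hin1.1 hin1.2) (pow_nonneg hfa0 _)
      have hfin : (f a)^(2^n) * ((f a)^(2^n - 1) * B) = (f a)^(2^(n+1) - 1) * B := by
        rw [← mul_assoc, ← pow_add]
        congr 2
        have : 0 < 2^n := Nat.pow_pos (by norm_num)
        have h2 : 2^(n+1) = 2^n + 2^n := by ring
        omega
      calc (f m)^(2^(n+1)) ≤ (f (m-t))^(2^n) * (f (m+t))^(2^n) := hstep
        _ ≤ (f a)^(2^n) * ((f a)^(2^n - 1) * B) := hkey
        _ = (f a)^(2^(n+1) - 1) * B := hfin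
  intro m hm1 hm2
  by_contra hlt
  push_neg at hlt
  have hfm : 0 < f m := lt_of_le_of_lt hfa0 hlt
  rcases eq_or_lt_of_le hfa0 with hfa | hfa
  · have h1 := hpow 1 m hm1 hm2
    rw [← hfa] at h1
    norm_num at h1
    nlinarith [h1, hfm]
  · have hr : 1 < f m / f a := (one_lt_div hfa).mpr hlt
    obtain ⟨n, hn⟩ := pow_unbounded_of_one_lt (B / f a) hr
    have h2n : (f m / f a)^n ≤ (f m / f a)^(2^n) :=
      pow_le_pow_right₀ (le_of_lt hr) (Nat.le_of_lt (Nat.lt_two_pow_self (n := n)))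
    have hP := hpow n m hm1 hm2
    have hcontr : (f m / f a)^(2^n) ≤ B / f a := by
      rw [div_pow, div_le_div_iff₀ (pow_pos hfa _) hfa]
      have hrw : (f a)^(2^n - 1) * B * f a = B * (f a)^(2^n) := by
        rw [mul_comm ((f a)^(2^n - 1)) B, mul_assoc, ← pow_succ]
        congr 2
        have : 0 < 2^n := Nat.pow_pos (by norm_num)
        omega
      calc (f m)^(2^n) * f a ≤ ((f a)^(2^n - 1) * B) * f a :=
            mul_le_mul_of_nonneg_right hP (le_of_lt hfa)
        _ = B * (f a)^(2^n) := hrw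
    linarith [lt_of_lt_of_le hn (le_trans h2n hcontr)]

/-- slab monotonicity at diagonal indices -/
lemma Wmono (hL : Even L) (hRPe : RPEdges AL phi)
    (hF1 : ∀ x : Torus d L, site f1 x ∈ AL) (hF2 : ∀ x : Torus d L, site f2 x ∈ AL)
    (hsym : TorusSymmetric phi f1 f2) (h : SubgroupLike Λ) (j : Fin d) {M : ℝ}
    (hbd : ∀ x y : Torus d L, twoPoint phi f1 f2 x y ≤ M) {i₀ i : ℕ}
    (h0 : i₀ ≤ i) (h1 : i + i₀ + 1 ≤ L / 2) :
    WG phi f1 f2 Λ j (i + i) ≤ WG phi f1 f2 Λ j (i₀ + i₀) := by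
  have hL2 : L / 2 + L / 2 = L := by obtain ⟨m, rfl⟩ := hL; omega
  set b := L / 2 - 1 - i₀ with hbdef
  have hab : i₀ ≤ b := by omega
  have key := maxp (fun m => WG phi f1 f2 Λ j (m + m)) i₀ b ((Λ.card : ℝ) * M) hab
    (by intro m hm1 hm2
        exact key0 phi f1 f2 hL hRPe hF1 hF2 hsym h j (by omega))
    (by intro m hm1 hm2
        have := Finset.sum_le_card_nsmul Λ (gE phi f1 f2 j (m + m)) M
          (fun r _ => gE_le_M phi f1 f2 hbd j _ r)
        rw [nsmul_eq_mul] at this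
        exact this)
    (by have hb2 : b + b = L - 2 - (i₀ + i₀) := by omega
        show WG phi f1 f2 Λ j (b + b) = WG phi f1 f2 Λ j (i₀ + i₀)
        rw [hb2]
        exact W_symm phi f1 f2 hsym h j (by omega))
    (by intro m t ht1 ht2
        have hcs := keyCS phi f1 f2 hL hRPe hF1 hF2 hsym h j
          (show m - t < L / 2 by omega) (show m + t < L / 2 by omega)
        have hrw : (m - t) + (m + t) = m + m := by omega
        rw [hrw] at hcs
        exact hcs)
  exact key i h0 (by omega)

end Mono

section Count
variable {d L : ℕ} [NeZero L] {Sig : Type*}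
variable (phi : (MState d L Sig → ℝ) →ₗ[ℝ] ℝ) (f1 f2 : Sig → ℝ)

/-- the even elements of `ZMod L` -/
def evensF (L : ℕ) [NeZero L] : Finset (ZMod L) :=
  (Finset.range (L/2)).image (fun k => ((2*k : ℕ) : ZMod L))

lemma mem_evensF (hL : Even L) {a : ZMod L} : a ∈ evensF L ↔ a.val % 2 = 0 := by
  have hLpos : 0 < L := Nat.pos_of_ne_zero (NeZero.ne L)
  have hL2 : L / 2 + L / 2 = L := by obtain ⟨m, rfl⟩ := hL; omega
  constructor
  · intro ha
    obtain ⟨k, hk, rfl⟩ := Finset.mem_image.mp ha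
    rw [Finset.mem_range] at hk
    rw [ZMod.val_cast_of_lt (by omega)]
    omega
  · intro ha
    apply Finset.mem_image.mpr
    refine ⟨a.val / 2, ?_, ?_⟩
    · rw [Finset.mem_range]
      have := ZMod.val_lt a
      omega
    · have h1 : 2 * (a.val / 2) = a.val := by omega
      rw [h1, ZMod.natCast_val, ZMod.cast_id]

lemma card_evensF (hL : Even L) : (evensF L).card = L / 2 := by
  have hLpos : 0 < L := Nat.pos_of_ne_zero (NeZero.ne L)
  have hL2 : L / 2 + L / 2 = L := by obtain ⟨m, rfl⟩ := hL; omega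
  rw [evensF, Finset.card_image_of_injOn, Finset.card_range]
  intro k hk k' hk' he
  rw [Finset.mem_coe, Finset.mem_range] at hk hk'
  have h1 : ((2*k : ℕ) : ZMod L).val = 2*k := ZMod.val_cast_of_lt (by omega)
  have h2 : ((2*k' : ℕ) : ZMod L).val = 2*k' := ZMod.val_cast_of_lt (by omega)
  have hval := congrArg ZMod.val he
  dsimp only at hval
  rw [h1, h2] at hval
  omega

lemma zero_mem_evensF (hL : Even L) : (0 : ZMod L) ∈ evensF L := by
  rw [mem_evensF hL]
  simp

lemma neg_mem_evensF (hL : Even L) {a : ZMod L} (ha : a ∈ evensF L) : -a ∈ evensF L := by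
  rw [mem_evensF hL] at ha ⊢
  by_cases h0 : a = 0
  · subst h0; simp
  · rw [ZMod.neg_val]
    rw [if_neg h0]
    have := ZMod.val_lt a
    obtain ⟨m, hm⟩ := hL
    omega

lemma add_mem_evensF (hL : Even L) {a b : ZMod L} (ha : a ∈ evensF L) (hb : b ∈ evensF L) :
    a + b ∈ evensF L := by
  rw [mem_evensF hL] at ha hb ⊢
  rw [ZMod.val_add]
  rw [Nat.mod_mod_of_dvd _ hL.two_dvd]
  omega

/-- full perp lattice -/
def LamF (d L : ℕ) [NeZero L] (j : Fin d) : Finset (Torus d L) :=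
  Fintype.piFinset (fun i => if i = j then {0} else Finset.univ)

/-- even perp lattice -/
def LamE (d L : ℕ) [NeZero L] (j : Fin d) : Finset (Torus d L) :=
  Fintype.piFinset (fun i => if i = j then {0} else evensF L)

lemma mem_LamF {j : Fin d} {r : Torus d L} : r ∈ LamF d L j ↔ r j = 0 := by
  rw [LamF, Fintype.mem_piFinset]
  constructor
  · intro h
    have := h j
    simpa using this
  · intro h i
    by_cases hij : i = j
    · subst hij; simpa using h
    · simp [hij]

lemma mem_LamE (hL : Even L) {j : Fin d} {r : Torus d L} :
    r ∈ LamE d L j ↔ r j = 0 ∧ ∀ i, i ≠ j → (r i).val % 2 = 0 := by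
  rw [LamE, Fintype.mem_piFinset]
  constructor
  · intro h
    constructor
    · have := h j; simpa using this
    · intro i hij
      have := h i
      rw [if_neg hij] at this
      exact (mem_evensF hL).mp this
  · rintro ⟨h1, h2⟩ i
    by_cases hij : i = j
    · subst hij; simpa using h1
    · rw [if_neg hij]
      exact (mem_evensF hL).mpr (h2 i hij)

lemma subgroupLike_LamF (j : Fin d) : SubgroupLike (LamF d L j) := by
  refine ⟨?_, ?_, ?_⟩
  · rw [mem_LamF]; rfl
  · intro r hr
    rw [mem_LamF] at hr ⊢
    simp [hr]
  · intro r hr s hs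
    rw [mem_LamF] at hr hs ⊢
    simp [hr, hs]

lemma subgroupLike_LamE (hL : Even L) (j : Fin d) : SubgroupLike (LamE d L j) := by
  refine ⟨?_, ?_, ?_⟩
  · rw [mem_LamE hL]
    exact ⟨rfl, fun i _ => by simp⟩
  · intro r hr
    rw [mem_LamE hL] at hr ⊢
    refine ⟨by simp [hr.1], fun i hij => ?_⟩
    have := neg_mem_evensF hL ((mem_evensF hL).mpr (hr.2 i hij))
    rw [mem_evensF hL] at this
    simpa using this
  · intro r hr s hs
    rw [mem_LamE hL] at hr hs ⊢
    refine ⟨by simp [hr.1, hs.1], fun i hij => ?_⟩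
    have := add_mem_evensF hL ((mem_evensF hL).mpr (hr.2 i hij))
      ((mem_evensF hL).mpr (hs.2 i hij))
    rw [mem_evensF hL] at this
    simpa using this

lemma prod_ite_card {c : ℕ} (j : Fin d) :
    ∏ i : Fin d, (if i = j then 1 else c) = c^(d-1) := by
  rw [← Finset.mul_prod_erase Finset.univ _ (Finset.mem_univ j)]
  rw [if_pos rfl, one_mul]
  have h1 : ∀ i ∈ Finset.univ.erase j, (if i = j then 1 else c) = c := by
    intro i hi
    rw [if_neg (Finset.mem_erase.mp hi).1]
  rw [Finset.prod_congr rfl h1, Finset.prod_const, Finset.card_erase_of_mem (Finset.mem_univ j),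
    Finset.card_univ, Fintype.card_fin]

lemma card_LamF (j : Fin d) : (LamF d L j).card = L^(d-1) := by
  rw [LamF, Fintype.card_piFinset]
  have h1 : ∀ i : Fin d, (if i = j then ({0} : Finset (ZMod L)) else Finset.univ).card =
      if i = j then 1 else L := by
    intro i
    by_cases hij : i = j <;> simp [hij, ZMod.card L]
  rw [Finset.prod_congr rfl (fun i _ => h1 i), prod_ite_card j]

lemma card_LamE (hL : Even L) (j : Fin d) : (LamE d L j).card = (L/2)^(d-1) := by
  rw [LamE, Fintype.card_piFinset]
  have h1 : ∀ i : Fin d, (if i = j then ({0} : Finset (ZMod L)) else evensF L).card =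
      if i = j then 1 else L/2 := by
    intro i
    by_cases hij : i = j <;> simp [hij, card_evensF hL]
  rw [Finset.prod_congr rfl (fun i _ => h1 i), prod_ite_card j]

lemma LamF_jcoord {j : Fin d} {r : Torus d L} (hr : r ∈ LamF d L j) : r j = 0 :=
  mem_LamF.mp hr

lemma LamE_jcoord (hL : Even L) {j : Fin d} {r : Torus d L} (hr : r ∈ LamE d L j) : r j = 0 :=
  ((mem_LamE hL).mp hr).1

end Count

section Mass
variable {d L : ℕ} [NeZero L] {Sig : Type*}
variable (phi : (MState d L Sig → ℝ) →ₗ[ℝ] ℝ) (f1 f2 : Sig → ℝ)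

lemma val_slab {σ : ℕ} (hσ : σ + 2 ≤ L) : (-((1+σ : ℕ) : ZMod L)).val = L - 1 - σ := by
  have h1 : -((1+σ : ℕ) : ZMod L) = ((L - 1 - σ : ℕ) : ZMod L) := by
    have hs : ((1+σ : ℕ) : ZMod L) + ((L - 1 - σ : ℕ) : ZMod L) = 0 := by
      rw [← Nat.cast_add, show (1+σ) + (L-1-σ) = L by omega, ZMod.natCast_self]
    linear_combination -hs
  rw [h1, ZMod.val_cast_of_lt (by omega)]

/-- mass domination: sums of slab deficits are dominated by the total deficit over a covering set -/
lemma mass_bound {M : ℝ} (hbd : ∀ x y : Torus d L, twoPoint phi f1 f2 x y ≤ M)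
    (j : Fin d) (Λ : Finset (Torus d L)) (hΛj : ∀ r ∈ Λ, r j = 0)
    {ι : Type*} [DecidableEq ι] (F : Finset ι) (sg : ι → ℕ)
    (hinj : ∀ i ∈ F, ∀ i' ∈ F, sg i = sg i' → i = i')
    (hrange : ∀ i ∈ F, sg i + 2 ≤ L)
    (T : Finset (Torus d L))
    (hcov : ∀ i ∈ F, ∀ r ∈ Λ, mkp j (-((1 + sg i : ℕ) : ZMod L)) r ∈ T) :
    ∑ i ∈ F, ((Λ.card : ℝ) * M - WG phi f1 f2 Λ j (sg i)) ≤
      ∑ y ∈ T, (M - twoPoint phi f1 f2 0 y) := by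
  classical
  have hstep : ∀ i ∈ F, (Λ.card : ℝ) * M - WG phi f1 f2 Λ j (sg i) =
      ∑ r ∈ Λ, (M - twoPoint phi f1 f2 0 (mkp j (-((1 + sg i : ℕ) : ZMod L)) r)) := by
    intro i _
    rw [Finset.sum_sub_distrib, Finset.sum_const, nsmul_eq_mul]
    rfl
  rw [Finset.sum_congr rfl hstep]
  rw [← Finset.sum_product']
  set ψ : ι × Torus d L → Torus d L := fun p => mkp j (-((1 + sg p.1 : ℕ) : ZMod L)) p.2 with hψ
  have hinjψ : ∀ p ∈ F ×ˢ Λ, ∀ q ∈ F ×ˢ Λ, ψ p = ψ q → p = q := by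
    rintro ⟨i, r⟩ hirc ⟨i', r'⟩ hirc' he
    have hir := Finset.mem_product.mp hirc
    have hir' := Finset.mem_product.mp hirc'
    have hj : (ψ (i, r)) j = (ψ (i', r')) j := by rw [he]
    simp only [hψ, mkp_self] at hj
    have hv := congrArg ZMod.val hj
    rw [val_slab (hrange i hir.1), val_slab (hrange i' hir'.1)] at hv
    have hii' : i = i' := hinj i hir.1 i' hir'.1 (by
      have := hrange i hir.1
      have := hrange i' hir'.1
      omega)
    subst hii'
    have hr : r = r' := by
      funext co
      by_cases hco : co = j
      · subst hco
        rw [hΛj r hir.2, hΛj r' hir'.2]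
      · have := congrFun he co
        simpa [hψ, mkp_ne _ _ hco] using this
    rw [hr]
  have heq : ∑ p ∈ F ×ˢ Λ, (M - twoPoint phi f1 f2 0 (ψ p)) =
      ∑ y ∈ (F ×ˢ Λ).image ψ, (M - twoPoint phi f1 f2 0 y) := by
    rw [Finset.sum_image hinjψ]
  rw [heq]
  apply Finset.sum_le_sum_of_subset_of_nonneg
  · intro y hy
    obtain ⟨⟨i, r⟩, hir, rfl⟩ := Finset.mem_image.mp hy
    rw [Finset.mem_product] at hir
    exact hcov i hir.1 r hir.2
  · intro y _ _
    have := hbd 0 y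
    linarith

/-- parity classes -/
def classOdd (d L : ℕ) [NeZero L] (j : Fin d) : Finset (Torus d L) :=
  Finset.univ.filter (fun y => (y j).val % 2 = 1 ∧ ∀ i, i ≠ j → (y i).val % 2 = 0)

def classEven (d L : ℕ) [NeZero L] : Finset (Torus d L) :=
  Finset.univ.filter (fun y => ∀ i, (y i).val % 2 = 0)

lemma tri_mass {j k : Fin d} (hjk : j ≠ k) (h : Torus d L → ℝ) (hnn : ∀ y, 0 ≤ h y) :
    ∑ y ∈ classOdd d L j, h y + ∑ y ∈ classOdd d L k, h y + ∑ y ∈ classEven d L, h y ≤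
      ∑ y : Torus d L, h y := by
  classical
  have hd1 : Disjoint (classOdd d L j) (classOdd d L k) := by
    rw [Finset.disjoint_left]
    intro y hyj hyk
    rw [classOdd, Finset.mem_filter] at hyj hyk
    have h1 := hyj.2.1
    have h2 := hyk.2.2 j hjk
    omega
  have hd2 : Disjoint (classOdd d L j ∪ classOdd d L k) (classEven d L) := by
    rw [Finset.disjoint_left]
    intro y hy hye
    rw [classEven, Finset.mem_filter] at hye
    rcases Finset.mem_union.mp hy with hy | hy
    · rw [classOdd, Finset.mem_filter] at hy
      have := hye.2 j
      have := hy.2.1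
      omega
    · rw [classOdd, Finset.mem_filter] at hy
      have := hye.2 k
      have := hy.2.1
      omega
  rw [← Finset.sum_union hd1, ← Finset.sum_union hd2]
  exact Finset.sum_le_sum_of_subset_of_nonneg (Finset.subset_univ _) (fun y _ _ => hnn y)

lemma mkp_mkp (j : Fin d) (c c' : ZMod L) (w : Torus d L) :
    mkp j c (mkp j c' w) = mkp j c w := by
  funext i
  by_cases h : i = j
  · subst h; simp [mkp]
  · simp [mkp, Function.update_of_ne h]

end Mass

section CaseA
variable {d L : ℕ} [NeZero L] {Sig : Type*}
variable (phi : (MState d L Sig → ℝ) →ₗ[ℝ] ℝ) (f1 f2 : Sig → ℝ)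
variable {AL : Subalgebra ℝ (MState d L Sig → ℝ)}

lemma caseA (hL : Even L) (hRPe : RPEdges AL phi)
    (hF1 : ∀ x : Torus d L, site f1 x ∈ AL) (hF2 : ∀ x : Torus d L, site f2 x ∈ AL)
    (hsym : TorusSymmetric phi f1 f2) {M : ℝ}
    (hbd : ∀ x y : Torus d L, twoPoint phi f1 f2 x y ≤ M)
    (x : Torus d L) (j : Fin d) (hodd : (x j).val % 2 = 1)
    (hD : 2 * min (x j).val (L - (x j).val) < L) :
    (M - twoPoint phi f1 f2 0 x) *
      (((L/2 - min (x j).val (L - (x j).val) + 1 : ℕ) : ℝ) * ((L^(d-1) : ℕ) : ℝ)) ≤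
      2 * ∑ y : Torus d L, (M - twoPoint phi f1 f2 0 y) := by
  classical
  have hLpos : 0 < L := Nat.pos_of_ne_zero (NeZero.ne L)
  have hL2 : L / 2 + L / 2 = L := by obtain ⟨m, rfl⟩ := hL; omega
  set a := (x j).val with hadef
  have haL : a < L := ZMod.val_lt _
  have ha1 : 1 ≤ a := by omega
  set D := min a (L - a) with hDdef
  have hDodd : D % 2 = 1 := by omega
  have hD1 : 1 ≤ D := by omega
  have hDhalf : 2 * D < L := hD
  set i₀ := (D - 1) / 2 with hi₀def
  have h2i₀ : i₀ + i₀ = D - 1 := by omega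
  have hi₀ : i₀ < L / 2 := by omega
  set Λ := LamF d L j with hΛdef
  have hsub : SubgroupLike Λ := subgroupLike_LamF j
  have hΛj : ∀ r ∈ Λ, r j = 0 := fun r hr => mem_LamF.mp hr
  set xp := mkp j 0 x with hxpdef
  have hxpΛ : xp ∈ Λ := mem_LamF.mpr (mkp_self j 0 x)
  have hgx : ∃ w₀ ∈ Λ, gE phi f1 f2 j (i₀ + i₀) w₀ = twoPoint phi f1 f2 0 x := by
    by_cases hside : a ≤ L / 2
    · refine ⟨-xp, hsub.2.1 xp hxpΛ, ?_⟩
      have hDa : D = a := by omega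
      unfold gE
      have hc : ((1 + (i₀ + i₀) : ℕ) : ZMod L) = x j := by
        rw [h2i₀, show 1 + (D - 1) = a by omega, hadef, ZMod.natCast_val, ZMod.cast_id]
      rw [hc]
      have hpt : mkp j (-(x j)) (-xp) = -x := by
        funext i
        by_cases h : i = j
        · subst h
          simp [mkp]
        · simp only [mkp, Function.update_of_ne h, Pi.neg_apply, hxpdef]
      rw [hpt]
      exact tg_neg phi f1 f2 hsym x
    · refine ⟨xp, hxpΛ, ?_⟩
      have hDa : D = L - a := by omega
      unfold gE
      have hc : -((1 + (i₀ + i₀) : ℕ) : ZMod L) = x j := by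
        rw [h2i₀, show 1 + (D - 1) = L - a by omega]
        have hxj : ((a : ℕ) : ZMod L) = x j := by
          rw [hadef, ZMod.natCast_val, ZMod.cast_id]
        have hs : ((L - a : ℕ) : ZMod L) + ((a : ℕ) : ZMod L) = 0 := by
          rw [← Nat.cast_add, show (L - a) + a = L by omega, ZMod.natCast_self]
        rw [← hxj]
        linear_combination -hs
      rw [hc]
      rw [show mkp j (x j) xp = x from by rw [hxpdef, mkp_mkp, mkp_eq_self]]
  obtain ⟨w₀, hw₀Λ, hgxeq⟩ := hgx
  have hk1 := key1 phi f1 f2 hL hRPe hF1 hF2 hsym hsub j hi₀ hw₀Λ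
  rw [hgxeq] at hk1
  have he : gE phi f1 f2 j (i₀ + i₀) 0 ≤ M := gE_le_M phi f1 f2 hbd j _ 0
  have hcard : (0:ℝ) < Λ.card := by exact_mod_cast card_pos_of_subgroupLike hsub
  have hH : (Λ.card : ℝ) * (M - twoPoint phi f1 f2 0 x) ≤
      2 * ((Λ.card : ℝ) * M - WG phi f1 f2 Λ j (i₀ + i₀)) := by
    nlinarith [hk1, he, hcard]
  set F := Finset.Ico i₀ (L/2 - i₀) with hFdef
  have hFcard : F.card = L/2 - D + 1 := by
    rw [hFdef, Nat.card_Ico]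
    omega
  have hmono : ∀ i ∈ F, (Λ.card : ℝ) * M - WG phi f1 f2 Λ j (i₀ + i₀) ≤
      (Λ.card : ℝ) * M - WG phi f1 f2 Λ j (i + i) := by
    intro i hi
    rw [hFdef, Finset.mem_Ico] at hi
    have := Wmono phi f1 f2 hL hRPe hF1 hF2 hsym hsub j hbd hi.1 (by omega)
    linarith
  have hmass := mass_bound phi f1 f2 hbd j Λ hΛj F (fun i => i + i)
    (fun i _ i' _ h => by omega)
    (by intro i hi
        rw [hFdef, Finset.mem_Ico] at hi
        omega)
    Finset.univ
    (fun i _ r _ => Finset.mem_univ _)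
  have hchain : (F.card : ℝ) * ((Λ.card : ℝ) * M - WG phi f1 f2 Λ j (i₀ + i₀)) ≤
      ∑ y : Torus d L, (M - twoPoint phi f1 f2 0 y) := by
    calc (F.card : ℝ) * ((Λ.card : ℝ) * M - WG phi f1 f2 Λ j (i₀ + i₀))
        = ∑ _i ∈ F, ((Λ.card : ℝ) * M - WG phi f1 f2 Λ j (i₀ + i₀)) := by
          rw [Finset.sum_const, nsmul_eq_mul]
      _ ≤ ∑ i ∈ F, ((Λ.card : ℝ) * M - WG phi f1 f2 Λ j (i + i)) := Finset.sum_le_sum hmono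
      _ ≤ ∑ y : Torus d L, (M - twoPoint phi f1 f2 0 y) := hmass
  have hcardval : (Λ.card : ℝ) = ((L^(d-1) : ℕ) : ℝ) := by
    rw [hΛdef, card_LamF]
  have hFc : (F.card : ℝ) = ((L/2 - D + 1 : ℕ) : ℝ) := by rw [hFcard]
  calc (M - twoPoint phi f1 f2 0 x) * (((L/2 - D + 1 : ℕ) : ℝ) * ((L^(d-1) : ℕ) : ℝ))
      = ((L/2 - D + 1 : ℕ) : ℝ) * ((Λ.card : ℝ) * (M - twoPoint phi f1 f2 0 x)) := by
        rw [hcardval]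
        ring
    _ ≤ ((L/2 - D + 1 : ℕ) : ℝ) * (2 * ((Λ.card : ℝ) * M - WG phi f1 f2 Λ j (i₀ + i₀))) := by
        apply mul_le_mul_of_nonneg_left hH
        positivity
    _ = 2 * ((F.card : ℝ) * ((Λ.card : ℝ) * M - WG phi f1 f2 Λ j (i₀ + i₀))) := by
        rw [hFc]
        ring
    _ ≤ 2 * ∑ y : Torus d L, (M - twoPoint phi f1 f2 0 y) := by linarith [hchain]

end CaseA

section Rec
variable {d L : ℕ} [NeZero L] {Sig : Type*}
variable (phi : (MState d L Sig → ℝ) →ₗ[ℝ] ℝ) (f1 f2 : Sig → ℝ)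
variable {AL : Subalgebra ℝ (MState d L Sig → ℝ)}

lemma WH_nonneg {M : ℝ} (hbd : ∀ x y : Torus d L, twoPoint phi f1 f2 x y ≤ M)
    (Λ : Finset (Torus d L)) (j : Fin d) (σ : ℕ) :
    0 ≤ (Λ.card : ℝ) * M - WG phi f1 f2 Λ j σ := by
  have h1 : WG phi f1 f2 Λ j σ ≤ (Λ.card : ℝ) * M := by
    have := Finset.sum_le_card_nsmul Λ (gE phi f1 f2 j σ) M
      (fun r _ => gE_le_M phi f1 f2 hbd j σ r)
    rw [nsmul_eq_mul] at this
    exact this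
  linarith

lemma prod_ite_two {c : ℕ} {j k : Fin d} (hjk : j ≠ k) :
    ∏ i : Fin d, (if i = j then 1 else if i = k then 1 else c) = c^(d-2) := by
  rw [← Finset.mul_prod_erase Finset.univ _ (Finset.mem_univ j), if_pos rfl, one_mul]
  have hk : k ∈ Finset.univ.erase j := Finset.mem_erase.mpr ⟨Ne.symm hjk, Finset.mem_univ k⟩
  rw [← Finset.mul_prod_erase _ _ hk, if_neg (Ne.symm hjk), if_pos rfl, one_mul]
  have h1 : ∀ i ∈ (Finset.univ.erase j).erase k,
      (if i = j then 1 else if i = k then 1 else c) = c := by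
    intro i hi
    rw [Finset.mem_erase, Finset.mem_erase] at hi
    rw [if_neg hi.2.1, if_neg hi.1]
  rw [Finset.prod_congr rfl h1, Finset.prod_const,
    Finset.card_erase_of_mem hk, Finset.card_erase_of_mem (Finset.mem_univ j),
    Finset.card_univ, Fintype.card_fin]
  all_goals simp [Nat.sub_sub]

lemma card_filter_LamE (hL : Even L) {j k : Fin d} (hjk : j ≠ k) (c : ZMod L) :
    ((LamE d L j).filter (fun r => r k = c)).card ≤ (L/2)^(d-2) := by
  classical
  have hsub : (LamE d L j).filter (fun r => r k = c) ⊆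
      Fintype.piFinset (fun i => if i = j then ({0} : Finset (ZMod L))
        else if i = k then {c} else evensF L) := by
    intro r hr
    rw [Finset.mem_filter] at hr
    obtain ⟨hr1, hr2⟩ := hr
    rw [mem_LamE hL] at hr1
    rw [Fintype.mem_piFinset]
    intro i
    by_cases hij : i = j
    · subst hij; simpa using hr1.1
    · rw [if_neg hij]
      by_cases hik : i = k
      · subst hik; simpa using hr2
      · rw [if_neg hik]
        exact (mem_evensF hL).mpr (hr1.2 i hij)
  calc ((LamE d L j).filter (fun r => r k = c)).card ≤ _ := Finset.card_le_card hsub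
    _ = (L/2)^(d-2) := by
        rw [Fintype.card_piFinset]
        have h1 : ∀ i : Fin d, (if i = j then ({0} : Finset (ZMod L))
            else if i = k then {c} else evensF L).card =
            if i = j then 1 else if i = k then 1 else L/2 := by
          intro i
          by_cases hij : i = j
          · simp [hij]
          · by_cases hik : i = k
            · rw [if_neg hij, if_neg hij, if_pos hik, if_pos hik]
              simp
            · rw [if_neg hij, if_neg hij, if_neg hik, if_neg hik]
              exact card_evensF hL
        rw [Finset.prod_congr rfl (fun i _ => h1 i), prod_ite_two hjk]

lemma sum_fiber_le (hL : Even L) {j k : Fin d} (hjk : j ≠ k) (G : ZMod L → ℝ)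
    (hG : ∀ c, 0 ≤ G c) :
    ∑ r ∈ (LamE d L j).filter (fun r => r k ≠ 0), G (r k) ≤
      (((L/2)^(d-2) : ℕ) : ℝ) * ∑ c ∈ (evensF L).erase 0, G c := by
  classical
  set S := (LamE d L j).filter (fun r => r k ≠ 0) with hS
  have hcomp : ∑ r ∈ S, G (r k) =
      ∑ c ∈ S.image (fun r : Torus d L => r k),
        (S.filter (fun r : Torus d L => r k = c)).card • G c :=
    Finset.sum_comp G (fun r : Torus d L => r k)
  rw [hcomp]
  have h1 : ∀ c ∈ S.image (fun r => r k),
      ((S.filter (fun r => r k = c)).card • G c : ℝ) ≤ (((L/2)^(d-2) : ℕ) : ℝ) * G c := by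
    intro c _
    rw [nsmul_eq_mul]
    apply mul_le_mul_of_nonneg_right _ (hG c)
    have hcard : (S.filter (fun r => r k = c)).card ≤ (L/2)^(d-2) := by
      calc (S.filter (fun r => r k = c)).card ≤
          ((LamE d L j).filter (fun r => r k = c)).card := by
              apply Finset.card_le_card
              intro r hr
              rw [Finset.mem_filter] at hr ⊢
              rw [hS, Finset.mem_filter] at hr
              exact ⟨hr.1.1, hr.2⟩
        _ ≤ (L/2)^(d-2) := card_filter_LamE hL hjk c
    exact_mod_cast hcard
  calc ∑ c ∈ S.image (fun r => r k), ((S.filter (fun r => r k = c)).card • G c : ℝ)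
      ≤ ∑ c ∈ S.image (fun r => r k), (((L/2)^(d-2) : ℕ) : ℝ) * G c := Finset.sum_le_sum h1
    _ ≤ ∑ c ∈ (evensF L).erase 0, (((L/2)^(d-2) : ℕ) : ℝ) * G c := by
        apply Finset.sum_le_sum_of_subset_of_nonneg
        · intro c hc
          obtain ⟨r, hr, rfl⟩ := Finset.mem_image.mp hc
          rw [hS, Finset.mem_filter] at hr
          rw [Finset.mem_erase]
          refine ⟨hr.2, ?_⟩
          rw [mem_evensF hL]
          exact ((mem_LamE hL).mp hr.1).2 k (Ne.symm hjk)
        · intro c _ _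
          exact mul_nonneg (by positivity) (hG c)
    _ = (((L/2)^(d-2) : ℕ) : ℝ) * ∑ c ∈ (evensF L).erase 0, G c := by
        rw [Finset.mul_sum]

end Rec

section RecB
variable {d L : ℕ} [NeZero L] {Sig : Type*}
variable (phi : (MState d L Sig → ℝ) →ₗ[ℝ] ℝ) (f1 f2 : Sig → ℝ)
variable {AL : Subalgebra ℝ (MState d L Sig → ℝ)}

lemma recB (hL : Even L) (hRPe : RPEdges AL phi)
    (hF1 : ∀ x : Torus d L, site f1 x ∈ AL) (hF2 : ∀ x : Torus d L, site f2 x ∈ AL)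
    (hsym : TorusSymmetric phi f1 f2) {M : ℝ}
    (hbd : ∀ x y : Torus d L, twoPoint phi f1 f2 x y ≤ M)
    {j k : Fin d} (hjk : j ≠ k) {D : ℕ} (hDev : D % 2 = 0) (hD2 : 2 ≤ D) (hDL : D + 2 ≤ L) :
    2 * (((L/2)^(d-1) : ℕ) : ℝ) *
      ((((L/2)^(d-1) : ℕ) : ℝ) * M - WG phi f1 f2 (LamE d L j) j (D - 1)) ≤
      (((L/2)^(d-2) : ℕ) : ℝ) *
        (2 * (∑ y ∈ classOdd d L k, (M - twoPoint phi f1 f2 0 y))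
          + 2 * (∑ y ∈ classEven d L, (M - twoPoint phi f1 f2 0 y)))
      + 2 * (((L/2)^(d-1) : ℕ) : ℝ) * ((((L/2)^(d-2) : ℕ) : ℝ) * (2 * M)) := by
  classical
  have hLpos : 0 < L := Nat.pos_of_ne_zero (NeZero.ne L)
  have hL2 : L / 2 + L / 2 = L := by obtain ⟨m, rfl⟩ := hL; omega
  have hcardj : (LamE d L j).card = (L/2)^(d-1) := card_LamE hL j
  have hcardk : (LamE d L k).card = (L/2)^(d-1) := card_LamE hL k
  have hsubk : SubgroupLike (LamE d L k) := subgroupLike_LamE hL k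
  have hcknn : (0:ℝ) ≤ ((LamE d L k).card : ℝ) := by positivity
  set c₀ : ZMod L := -((1 + (D-1) : ℕ) : ZMod L) with hc₀
  have hc₀val : c₀.val = L - D := by
    rw [hc₀, val_slab (by omega)]
    omega
  have hc₀ne : c₀ ≠ 0 := by
    intro h
    rw [h, ZMod.val_zero] at hc₀val
    omega
  set G : ZMod L → ℝ := fun c => if c = 0 then 0 else
    (((LamE d L k).card : ℝ) * M -
        WG phi f1 f2 (LamE d L k) k ((L - c.val)/2 + (L - c.val)/2)) +
    (((LamE d L k).card : ℝ) * M -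
        WG phi f1 f2 (LamE d L k) k (((L - c.val)/2 - 1) + ((L - c.val)/2 - 1))) +
    2 * (((LamE d L k).card : ℝ) * M -
        WG phi f1 f2 (LamE d L k) k ((L - c.val)/2 + ((L - c.val)/2 - 1))) with hG
  have hGnn : ∀ c, 0 ≤ G c := by
    intro c
    rw [hG]
    dsimp only
    by_cases h : c = 0
    · simp [h]
    · rw [if_neg h]
      have w1 := WH_nonneg phi f1 f2 hbd (LamE d L k) k ((L - c.val)/2 + (L - c.val)/2)
      have w2 := WH_nonneg phi f1 f2 hbd (LamE d L k) k
        (((L - c.val)/2 - 1) + ((L - c.val)/2 - 1))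
      have w3 := WH_nonneg phi f1 f2 hbd (LamE d L k) k ((L - c.val)/2 + ((L - c.val)/2 - 1))
      linarith
  have hmaster : ∀ r ∈ LamE d L j, r k ≠ 0 →
      2 * ((LamE d L k).card : ℝ) * (M - twoPoint phi f1 f2 0 (mkp j c₀ r)) ≤ G (r k) := by
    intro r hrΛ hrk
    have hmem := (mem_LamE hL).mp hrΛ
    set b := (r k).val with hb
    have hbev : b % 2 = 0 := hmem.2 k (Ne.symm hjk)
    have hb1 : b ≠ 0 := fun h => hrk ((ZMod.val_eq_zero _).mp h)
    have hbL : b < L := ZMod.val_lt _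
    set i1 := (L - b)/2 with hi1
    set i2 := (L - b)/2 - 1 with hi2
    have h2i1 : i1 + i1 = L - b := by omega
    have hi12 : i1 + i2 = L - b - 1 := by omega
    have hi1lt : i1 < L / 2 := by omega
    have hi2lt : i2 < L / 2 := by omega
    set y := mkp j c₀ r with hy
    set w₀ := mkp k 0 y with hw₀
    have hw₀Λ : w₀ ∈ LamE d L k := by
      rw [mem_LamE hL]
      refine ⟨by rw [hw₀, mkp_self], fun i hik => ?_⟩
      rw [hw₀, mkp_ne _ _ hik]
      by_cases hij : i = j
      · subst hij
        rw [hy, mkp_self, hc₀val]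
        omega
      · rw [hy, mkp_ne _ _ hij]
        exact hmem.2 i hij
    have hk2 := key2 phi f1 f2 hL hRPe hF1 hF2 hsym hsubk k hi1lt hi2lt hw₀Λ
    have hcross : gE phi f1 f2 k (i1 + i2) w₀ = twoPoint phi f1 f2 0 y := by
      unfold gE
      have hcc : -((1 + (i1+i2) : ℕ) : ZMod L) = y k := by
        rw [hi12, show 1 + (L - b - 1) = L - b by omega]
        have hyk : y k = r k := by rw [hy, mkp_ne _ _ (Ne.symm hjk)]
        have hbk : ((b:ℕ) : ZMod L) = r k := by rw [hb, ZMod.natCast_val, ZMod.cast_id]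
        have hs : ((L - b : ℕ) : ZMod L) + ((b:ℕ) : ZMod L) = 0 := by
          rw [← Nat.cast_add, show (L - b) + b = L by omega, ZMod.natCast_self]
        rw [hyk, ← hbk]
        linear_combination -hs
      rw [hcc, hw₀, mkp_mkp, mkp_eq_self]
    rw [hcross] at hk2
    have he1 : gE phi f1 f2 k (i1+i1) 0 ≤ M := gE_le_M phi f1 f2 hbd k _ 0
    have he2 : gE phi f1 f2 k (i2+i2) 0 ≤ M := gE_le_M phi f1 f2 hbd k _ 0
    have hm1 : ((LamE d L k).card : ℝ) * gE phi f1 f2 k (i1+i1) 0 ≤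
        ((LamE d L k).card : ℝ) * M := mul_le_mul_of_nonneg_left he1 hcknn
    have hm2 : ((LamE d L k).card : ℝ) * gE phi f1 f2 k (i2+i2) 0 ≤
        ((LamE d L k).card : ℝ) * M := mul_le_mul_of_nonneg_left he2 hcknn
    rw [hG]
    dsimp only
    rw [if_neg hrk]
    rw [← hb, ← hi2, ← hi1]
    nlinarith [hk2, hm1, hm2]
  -- split the slab sum
  have hWH : ((LamE d L j).card : ℝ) * M - WG phi f1 f2 (LamE d L j) j (D-1) =
      ∑ r ∈ LamE d L j, (M - twoPoint phi f1 f2 0 (mkp j c₀ r)) := by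
    rw [Finset.sum_sub_distrib, Finset.sum_const, nsmul_eq_mul]
    rfl
  have hsplit : ∑ r ∈ LamE d L j, (M - twoPoint phi f1 f2 0 (mkp j c₀ r)) =
      (∑ r ∈ (LamE d L j).filter (fun r => r k ≠ 0),
        (M - twoPoint phi f1 f2 0 (mkp j c₀ r))) +
      ∑ r ∈ (LamE d L j).filter (fun r => ¬ (r k ≠ 0)),
        (M - twoPoint phi f1 f2 0 (mkp j c₀ r)) :=
    (Finset.sum_filter_add_sum_filter_not _ _ _).symm
  -- A part
  have hA : 2 * ((LamE d L k).card : ℝ) *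
      ∑ r ∈ (LamE d L j).filter (fun r => r k ≠ 0),
        (M - twoPoint phi f1 f2 0 (mkp j c₀ r)) ≤
      (((L/2)^(d-2) : ℕ) : ℝ) * ∑ c ∈ (evensF L).erase 0, G c := by
    rw [Finset.mul_sum]
    calc ∑ r ∈ (LamE d L j).filter (fun r => r k ≠ 0),
          2 * ((LamE d L k).card : ℝ) * (M - twoPoint phi f1 f2 0 (mkp j c₀ r))
        ≤ ∑ r ∈ (LamE d L j).filter (fun r => r k ≠ 0), G (r k) := by
          apply Finset.sum_le_sum
          intro r hr
          rw [Finset.mem_filter] at hr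
          exact hmaster r hr.1 hr.2
      _ ≤ _ := sum_fiber_le hL hjk G hGnn
  -- mass bounds for ΣG
  have hGsum : ∑ c ∈ (evensF L).erase 0, G c ≤
      2 * (∑ y ∈ classOdd d L k, (M - twoPoint phi f1 f2 0 y))
        + 2 * (∑ y ∈ classEven d L, (M - twoPoint phi f1 f2 0 y)) := by
    have hval : ∀ c ∈ (evensF L).erase 0, 2 ≤ c.val ∧ c.val ≤ L - 2 ∧ c.val % 2 = 0 := by
      intro c hc
      rw [Finset.mem_erase] at hc
      have h1 := (mem_evensF hL).mp hc.2
      have h2 : c.val ≠ 0 := fun h => hc.1 ((ZMod.val_eq_zero _).mp h)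
      have h3 := ZMod.val_lt c
      omega
    have hGeq : ∀ c ∈ (evensF L).erase 0, G c =
        (((LamE d L k).card : ℝ) * M -
            WG phi f1 f2 (LamE d L k) k ((L - c.val)/2 + (L - c.val)/2)) +
        (((LamE d L k).card : ℝ) * M -
            WG phi f1 f2 (LamE d L k) k (((L - c.val)/2 - 1) + ((L - c.val)/2 - 1))) +
        2 * (((LamE d L k).card : ℝ) * M -
            WG phi f1 f2 (LamE d L k) k ((L - c.val)/2 + ((L - c.val)/2 - 1))) := by
      intro c hc
      rw [Finset.mem_erase] at hc
      rw [hG]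
      dsimp only
      rw [if_neg hc.1]
    rw [Finset.sum_congr rfl hGeq]
    rw [Finset.sum_add_distrib, Finset.sum_add_distrib, ← Finset.mul_sum]
    have hkj : ∀ r ∈ LamE d L k, r k = 0 := fun r hr => ((mem_LamE hL).mp hr).1
    have hMa := mass_bound phi f1 f2 hbd k (LamE d L k) hkj ((evensF L).erase 0)
      (fun c => (L - c.val)/2 + (L - c.val)/2)
      (by intro c hc c' hc' he
          have h1 := hval c hc
          have h2 := hval c' hc'
          have : c.val = c'.val := by omega
          exact ZMod.val_injective _ this)
      (by intro c hc
          have := hval c hc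
          omega)
      (classOdd d L k)
      (by intro c hc r hr
          have hcv := hval c hc
          rw [classOdd, Finset.mem_filter]
          refine ⟨Finset.mem_univ _, ?_, ?_⟩
          · rw [mkp_self, val_slab (by omega)]
            omega
          · intro i hik
            rw [mkp_ne _ _ hik]
            exact ((mem_LamE hL).mp hr).2 i hik)
    have hMb := mass_bound phi f1 f2 hbd k (LamE d L k) hkj ((evensF L).erase 0)
      (fun c => ((L - c.val)/2 - 1) + ((L - c.val)/2 - 1))
      (by intro c hc c' hc' he
          have h1 := hval c hc
          have h2 := hval c' hc'
          have : c.val = c'.val := by omega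
          exact ZMod.val_injective _ this)
      (by intro c hc
          have := hval c hc
          omega)
      (classOdd d L k)
      (by intro c hc r hr
          have hcv := hval c hc
          rw [classOdd, Finset.mem_filter]
          refine ⟨Finset.mem_univ _, ?_, ?_⟩
          · rw [mkp_self, val_slab (by omega)]
            omega
          · intro i hik
            rw [mkp_ne _ _ hik]
            exact ((mem_LamE hL).mp hr).2 i hik)
    have hMc := mass_bound phi f1 f2 hbd k (LamE d L k) hkj ((evensF L).erase 0)
      (fun c => (L - c.val)/2 + ((L - c.val)/2 - 1))
      (by intro c hc c' hc' he
          have h1 := hval c hc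
          have h2 := hval c' hc'
          have : c.val = c'.val := by omega
          exact ZMod.val_injective _ this)
      (by intro c hc
          have := hval c hc
          omega)
      (classEven d L)
      (by intro c hc r hr
          have hcv := hval c hc
          rw [classEven, Finset.mem_filter]
          refine ⟨Finset.mem_univ _, ?_⟩
          intro i
          by_cases hik : i = k
          · subst hik
            rw [mkp_self, val_slab (by omega)]
            omega
          · rw [mkp_ne _ _ hik]
            exact ((mem_LamE hL).mp hr).2 i hik)
    linarith [hMa, hMb, hMc]
  -- B part
  have hB : ∑ r ∈ (LamE d L j).filter (fun r => ¬ (r k ≠ 0)),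
      (M - twoPoint phi f1 f2 0 (mkp j c₀ r)) ≤ (((L/2)^(d-2) : ℕ) : ℝ) * (2 * M) := by
    have hptw : ∀ r ∈ (LamE d L j).filter (fun r => ¬ (r k ≠ 0)),
        M - twoPoint phi f1 f2 0 (mkp j c₀ r) ≤ 2 * M := by
      intro r _
      have := tg_ge phi f1 f2 hL hRPe hF1 hF2 hsym hbd
        (j := j) (z := mkp j c₀ r) (by rw [mkp_self]; exact hc₀ne)
      linarith
    calc ∑ r ∈ (LamE d L j).filter (fun r => ¬ (r k ≠ 0)),
          (M - twoPoint phi f1 f2 0 (mkp j c₀ r))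
        ≤ ∑ _r ∈ (LamE d L j).filter (fun r => ¬ (r k ≠ 0)), 2 * M :=
          Finset.sum_le_sum hptw
      _ = (((LamE d L j).filter (fun r => ¬ (r k ≠ 0))).card : ℝ) * (2 * M) := by
          rw [Finset.sum_const, nsmul_eq_mul]
      _ ≤ (((L/2)^(d-2) : ℕ) : ℝ) * (2 * M) := by
          apply mul_le_mul_of_nonneg_right _ (by
            have := hbd 0 0
            have h0 := tg_ge phi f1 f2 hL hRPe hF1 hF2 hsym hbd
              (j := j) (z := mkp j c₀ 0) (by rw [mkp_self]; exact hc₀ne)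
            have h1 := hbd 0 (mkp j c₀ 0)
            linarith)
          have hsub2 : ((LamE d L j).filter (fun r => ¬ (r k ≠ 0))) ⊆
              ((LamE d L j).filter (fun r => r k = 0)) := by
            intro r hr
            rw [Finset.mem_filter] at hr ⊢
            exact ⟨hr.1, not_not.mp hr.2⟩
          have := Finset.card_le_card hsub2
          have h2 := card_filter_LamE hL hjk (0 : ZMod L)
          exact_mod_cast le_trans this h2
  -- assemble
  have hnn0 : (0:ℝ) ≤ ((LamE d L k).card : ℝ) := hcknn
  calc 2 * (((L/2)^(d-1) : ℕ) : ℝ) *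
        ((((L/2)^(d-1) : ℕ) : ℝ) * M - WG phi f1 f2 (LamE d L j) j (D - 1))
      = 2 * ((LamE d L k).card : ℝ) *
        (∑ r ∈ (LamE d L j).filter (fun r => r k ≠ 0),
          (M - twoPoint phi f1 f2 0 (mkp j c₀ r)) +
         ∑ r ∈ (LamE d L j).filter (fun r => ¬ (r k ≠ 0)),
          (M - twoPoint phi f1 f2 0 (mkp j c₀ r))) := by
        rw [← hsplit, ← hWH, hcardj, hcardk]
    _ ≤ (((L/2)^(d-2) : ℕ) : ℝ) * ∑ c ∈ (evensF L).erase 0, G c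
        + 2 * ((LamE d L k).card : ℝ) * ((((L/2)^(d-2) : ℕ) : ℝ) * (2*M)) := by
        have h2 := mul_le_mul_of_nonneg_left hB
          (by positivity : (0:ℝ) ≤ 2 * ((LamE d L k).card : ℝ))
        nlinarith [hA, h2]
    _ ≤ _ := by
        rw [hcardk]
        have hK2nn : (0:ℝ) ≤ (((L/2)^(d-2) : ℕ) : ℝ) := by positivity
        nlinarith [hGsum, hK2nn]

end RecB

section CaseB
variable {d L : ℕ} [NeZero L] {Sig : Type*}
variable (phi : (MState d L Sig → ℝ) →ₗ[ℝ] ℝ) (f1 f2 : Sig → ℝ)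
variable {AL : Subalgebra ℝ (MState d L Sig → ℝ)}

lemma caseB (hL : Even L) (hRPe : RPEdges AL phi)
    (hF1 : ∀ x : Torus d L, site f1 x ∈ AL) (hF2 : ∀ x : Torus d L, site f2 x ∈ AL)
    (hsym : TorusSymmetric phi f1 f2) {M : ℝ}
    (hbd : ∀ x y : Torus d L, twoPoint phi f1 f2 x y ≤ M)
    (x : Torus d L) {j k : Fin d} (hjk : j ≠ k)
    (hallev : ∀ i, (x i).val % 2 = 0) (hx0 : (x j).val ≠ 0)
    (hD : 2 * min (x j).val (L - (x j).val) < L) :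
    (M - twoPoint phi f1 f2 0 x) *
      (2 * ((((L/2)^(d-1) : ℕ) : ℝ))^2 * ((L/2 - min (x j).val (L - (x j).val) : ℕ) : ℝ)) ≤
      2 * (((L/2)^(d-1) : ℕ) : ℝ) * (∑ y ∈ classOdd d L j, (M - twoPoint phi f1 f2 0 y))
      + ((L/2 - min (x j).val (L - (x j).val) : ℕ) : ℝ) *
        ((((L/2)^(d-2) : ℕ) : ℝ) *
          (2 * (∑ y ∈ classOdd d L k, (M - twoPoint phi f1 f2 0 y))
            + 2 * (∑ y ∈ classEven d L, (M - twoPoint phi f1 f2 0 y)))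
         + 2 * (((L/2)^(d-1) : ℕ) : ℝ) * ((((L/2)^(d-2) : ℕ) : ℝ) * (2 * M))) := by
  classical
  have hLpos : 0 < L := Nat.pos_of_ne_zero (NeZero.ne L)
  have hL2 : L / 2 + L / 2 = L := by obtain ⟨m, rfl⟩ := hL; omega
  set a := (x j).val with hadef
  have haL : a < L := ZMod.val_lt _
  have haev : a % 2 = 0 := hallev j
  have ha1 : 2 ≤ a := by omega
  set D := min a (L - a) with hDdef
  have hDev : D % 2 = 0 := by omega
  have hD2 : 2 ≤ D := by omega
  have hDhalf : 2 * D < L := hD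
  set i1 := D / 2 with hi1def
  set i2 := D / 2 - 1 with hi2def
  have h2i1 : i1 + i1 = D := by omega
  have h2i2 : i2 + i2 = D - 2 := by omega
  have hi12 : i1 + i2 = D - 1 := by omega
  have hi1lt : i1 < L / 2 := by omega
  have hi2lt : i2 < L / 2 := by omega
  have hsub : SubgroupLike (LamE d L j) := subgroupLike_LamE hL j
  have hcard : (LamE d L j).card = (L/2)^(d-1) := card_LamE hL j
  have hΛj : ∀ r ∈ LamE d L j, r j = 0 := fun r hr => ((mem_LamE hL).mp hr).1
  set xp := mkp j 0 x with hxpdef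
  have hxpΛ : xp ∈ LamE d L j := by
    rw [mem_LamE hL]
    refine ⟨by rw [hxpdef, mkp_self], fun i hij => ?_⟩
    rw [hxpdef, mkp_ne _ _ hij]
    exact hallev i
  have hgx : ∃ w₀ ∈ LamE d L j, gE phi f1 f2 j (i1 + i2) w₀ = twoPoint phi f1 f2 0 x := by
    by_cases hside : a ≤ L / 2
    · refine ⟨-xp, hsub.2.1 xp hxpΛ, ?_⟩
      have hDa : D = a := by omega
      unfold gE
      have hc : ((1 + (i1 + i2) : ℕ) : ZMod L) = x j := by
        rw [hi12, show 1 + (D - 1) = a by omega, hadef, ZMod.natCast_val, ZMod.cast_id]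
      rw [hc]
      have hpt : mkp j (-(x j)) (-xp) = -x := by
        funext i
        by_cases h : i = j
        · subst h
          simp [mkp]
        · simp only [mkp, Function.update_of_ne h, Pi.neg_apply, hxpdef]
      rw [hpt]
      exact tg_neg phi f1 f2 hsym x
    · refine ⟨xp, hxpΛ, ?_⟩
      have hDa : D = L - a := by omega
      unfold gE
      have hc : -((1 + (i1 + i2) : ℕ) : ZMod L) = x j := by
        rw [hi12, show 1 + (D - 1) = L - a by omega]
        have hxj : ((a : ℕ) : ZMod L) = x j := by
          rw [hadef, ZMod.natCast_val, ZMod.cast_id]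
        have hs : ((L - a : ℕ) : ZMod L) + ((a : ℕ) : ZMod L) = 0 := by
          rw [← Nat.cast_add, show (L - a) + a = L by omega, ZMod.natCast_self]
        rw [← hxj]
        linear_combination -hs
      rw [hc]
      rw [show mkp j (x j) xp = x from by rw [hxpdef, mkp_mkp, mkp_eq_self]]
  obtain ⟨w₀, hw₀Λ, hgxeq⟩ := hgx
  have hk2 := key2 phi f1 f2 hL hRPe hF1 hF2 hsym hsub j hi1lt hi2lt hw₀Λ
  rw [hgxeq] at hk2
  have hcnn : (0:ℝ) ≤ ((LamE d L j).card : ℝ) := by positivity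
  have he1 : gE phi f1 f2 j (i1 + i1) 0 ≤ M := gE_le_M phi f1 f2 hbd j _ 0
  have he2 : gE phi f1 f2 j (i2 + i2) 0 ≤ M := gE_le_M phi f1 f2 hbd j _ 0
  have hm1 : ((LamE d L j).card : ℝ) * gE phi f1 f2 j (i1+i1) 0 ≤
      ((LamE d L j).card : ℝ) * M := mul_le_mul_of_nonneg_left he1 hcnn
  have hm2 : ((LamE d L j).card : ℝ) * gE phi f1 f2 j (i2+i2) 0 ≤
      ((LamE d L j).card : ℝ) * M := mul_le_mul_of_nonneg_left he2 hcnn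
  have hH : 2 * ((LamE d L j).card : ℝ) * (M - twoPoint phi f1 f2 0 x) ≤
      (((LamE d L j).card : ℝ) * M - WG phi f1 f2 (LamE d L j) j (i1+i1))
      + (((LamE d L j).card : ℝ) * M - WG phi f1 f2 (LamE d L j) j (i2+i2))
      + 2 * (((LamE d L j).card : ℝ) * M - WG phi f1 f2 (LamE d L j) j (i1+i2)) := by
    nlinarith [hk2, hm1, hm2]
  -- mono + mass for the two odd slabs
  have hslab : ∀ i0 : ℕ, i0 ≤ L/2 - 1 →
      ((Finset.Ico i0 (L/2 - i0)).card : ℝ) *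
        (((LamE d L j).card : ℝ) * M - WG phi f1 f2 (LamE d L j) j (i0+i0)) ≤
        ∑ y ∈ classOdd d L j, (M - twoPoint phi f1 f2 0 y) := by
    intro i0 hi0
    have hmono : ∀ i ∈ Finset.Ico i0 (L/2 - i0),
        ((LamE d L j).card : ℝ) * M - WG phi f1 f2 (LamE d L j) j (i0 + i0) ≤
        ((LamE d L j).card : ℝ) * M - WG phi f1 f2 (LamE d L j) j (i + i) := by
      intro i hi
      rw [Finset.mem_Ico] at hi
      have := Wmono phi f1 f2 hL hRPe hF1 hF2 hsym hsub j hbd hi.1 (by omega)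
      linarith
    have hmass := mass_bound phi f1 f2 hbd j (LamE d L j) hΛj (Finset.Ico i0 (L/2 - i0))
      (fun i => i + i)
      (fun i _ i' _ h => by omega)
      (by intro i hi
          rw [Finset.mem_Ico] at hi
          omega)
      (classOdd d L j)
      (by intro i hi r hr
          rw [Finset.mem_Ico] at hi
          rw [classOdd, Finset.mem_filter]
          refine ⟨Finset.mem_univ _, ?_, ?_⟩
          · rw [mkp_self, val_slab (by omega)]
            omega
          · intro i' hij
            rw [mkp_ne _ _ hij]
            exact ((mem_LamE hL).mp hr).2 i' hij)
    calc ((Finset.Ico i0 (L/2 - i0)).card : ℝ) *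
          (((LamE d L j).card : ℝ) * M - WG phi f1 f2 (LamE d L j) j (i0+i0))
        = ∑ _i ∈ Finset.Ico i0 (L/2 - i0),
            (((LamE d L j).card : ℝ) * M - WG phi f1 f2 (LamE d L j) j (i0+i0)) := by
          rw [Finset.sum_const, nsmul_eq_mul]
      _ ≤ ∑ i ∈ Finset.Ico i0 (L/2 - i0),
            (((LamE d L j).card : ℝ) * M - WG phi f1 f2 (LamE d L j) j (i+i)) :=
          Finset.sum_le_sum hmono
      _ ≤ _ := hmass
  have hcard1 : (Finset.Ico i1 (L/2 - i1)).card = L/2 - D := by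
    rw [Nat.card_Ico]
    omega
  have hcard2 : (Finset.Ico i2 (L/2 - i2)).card = L/2 - D + 2 := by
    rw [Nat.card_Ico]
    omega
  have hs1 := hslab i1 (by omega)
  have hs2 := hslab i2 (by omega)
  rw [hcard1] at hs1
  rw [hcard2] at hs2
  -- recursion for the even slab
  have hrec := recB phi f1 f2 hL hRPe hF1 hF2 hsym hbd hjk hDev hD2 (by omega)
  rw [← hi12] at hrec
  -- nonnegativity facts
  have hWH1 := WH_nonneg phi f1 f2 hbd (LamE d L j) j (i1+i1)
  have hWH2 := WH_nonneg phi f1 f2 hbd (LamE d L j) j (i2+i2)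
  have hWH0 := WH_nonneg phi f1 f2 hbd (LamE d L j) j (i1+i2)
  have hNFnn : (0:ℝ) ≤ ((L/2 - D : ℕ) : ℝ) := by positivity
  have hKnn : (0:ℝ) ≤ (((L/2)^(d-1) : ℕ) : ℝ) := by positivity
  -- from hs2, weaker form with the same prefactor
  have hs2' : ((L/2 - D : ℕ) : ℝ) *
      (((LamE d L j).card : ℝ) * M - WG phi f1 f2 (LamE d L j) j (i2+i2)) ≤
      ∑ y ∈ classOdd d L j, (M - twoPoint phi f1 f2 0 y) := by
    have hle : ((L/2 - D : ℕ) : ℝ) ≤ ((L/2 - D + 2 : ℕ) : ℝ) := by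
      exact_mod_cast Nat.le_add_right _ 2
    nlinarith [hs2, hWH2, hle]
  -- final combination
  rw [hcard] at hH hs1 hs2' hWH1 hWH2 hWH0
  nlinarith [hH, hs1, hs2', hrec, hWH0, hWH1, hWH2, hNFnn, hKnn,
    mul_le_mul_of_nonneg_left hs1 hKnn,
    mul_le_mul_of_nonneg_left hs2' hKnn,
    mul_le_mul_of_nonneg_left hrec hNFnn,
    mul_le_mul_of_nonneg_left hH (mul_nonneg hKnn hNFnn)]

end CaseB

section Final
variable {d L : ℕ} [NeZero L] {Sig : Type*}

lemma coordRep_abs (hL : Even L) (a : ZMod L) :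
    |coordRep L a| = ((min a.val (L - a.val) : ℕ) : ℤ) := by
  have hv : a.val < L := ZMod.val_lt a
  have hL2 : L / 2 + L / 2 = L := by obtain ⟨m, rfl⟩ := hL; omega
  have hI : ((L : ℤ))/2 = ((L/2 : ℕ) : ℤ) := by omega
  unfold coordRep
  split_ifs with h
  · rw [abs_of_nonneg (by positivity)]
    omega
  · push_neg at h
    rw [abs_of_nonpos (by
      have : (a.val : ℤ) < (L : ℤ) := by exact_mod_cast hv
      linarith)]
    omega

lemma card_torus : Fintype.card (Torus d L) = L^d := by
  rw [show Fintype.card (Torus d L) = Fintype.card (ZMod L) ^ Fintype.card (Fin d) from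
    Fintype.card_fun]
  rw [ZMod.card L, Fintype.card_fin]

end Final

/-- If moreover `⟨·⟩` is reflection positive also for reflections through vertices, then for
`ε ∈ (0,1/2)`, `C < C₁` and all large even `L`, at every point `x` whose coordinates are all
in `(0, εL)` one has `G_L(o,x) ≥ M − (1/2 − ε)^{-d} (M − C)`. -/
theorem statement7 (d : ℕ) (hd : 2 ≤ d) (Sig : ℕ → Type*)
    (AL : ∀ L : ℕ, Subalgebra ℝ (MState d L (Sig L) → ℝ))
    (hfin : ∀ L : ℕ, FiniteDimensional ℝ (AL L))
    (phi : ∀ L : ℕ, (MState d L (Sig L) → ℝ) →ₗ[ℝ] ℝ)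
    (hone : ∀ L : ℕ, phi L 1 = 1)
    (f1 f2 : ∀ L : ℕ, Sig L → ℝ)
    (hF1 : ∀ (L : ℕ) (x : Torus d L), site (f1 L) x ∈ AL L)
    (hF2 : ∀ (L : ℕ) (x : Torus d L), site (f2 L) x ∈ AL L)
    (hRP : ∀ (L : ℕ) [NeZero L], Even L → RPEdges (AL L) (phi L))
    (hRPv : ∀ (L : ℕ) [NeZero L], Even L → RPVertices (AL L) (phi L))
    (hsym : ∀ (L : ℕ) [NeZero L], Even L → TorusSymmetric (phi L) (f1 L) (f2 L))
    (C₁ : ℝ) (hC₁ : 0 < C₁) (M : ℝ) (hM : 0 < M)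
    (hliminf : ∀ δ : ℝ, 0 < δ → ∃ L₀ : ℕ, ∀ (L : ℕ) [NeZero L], Even L → L₀ ≤ L →
      C₁ - δ ≤ (∑ x : Torus d L, twoPoint (phi L) (f1 L) (f2 L) 0 x) / (L : ℝ) ^ d)
    (hbd : ∀ (L : ℕ) [NeZero L], Even L → ∀ x y : Torus d L, twoPoint (phi L) (f1 L) (f2 L) x y ≤ M) :
    ∀ ε : ℝ, 0 < ε → ε < 1 / 2 → ∀ C : ℝ, C < C₁ →
      ∃ L₀ : ℕ, ∀ (L : ℕ) [NeZero L], Even L → L₀ ≤ L →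
        ∀ x : Torus d L,
          (∀ i : Fin d, 0 < |coordRep L (x i)| ∧ (|coordRep L (x i)| : ℝ) < ε * L) →
          M - (M - C) / (1 / 2 - ε) ^ d ≤ twoPoint (phi L) (f1 L) (f2 L) 0 x := by
  intro ε hε1 hε2 C hC
  set δ := (C₁ - C) / 2 with hδdef
  have hδ : 0 < δ := by rw [hδdef]; linarith only [hC]
  obtain ⟨L₁, hL₁⟩ := hliminf δ hδ
  refine ⟨max L₁ (⌈M / δ⌉₊ + 1), ?_⟩
  intro L _inst hLev hLge x hx
  have hLpos : 0 < L := Nat.pos_of_ne_zero (NeZero.ne L)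
  have hL2 : L / 2 + L / 2 = L := by obtain ⟨m, hm⟩ := hLev; omega
  have hLr : (0:ℝ) < L := by exact_mod_cast hLpos
  have hLδ : M ≤ δ * L := by
    have h0 : ⌈M / δ⌉₊ + 1 ≤ L := le_trans (le_max_right _ _) hLge
    have h1 : (⌈M / δ⌉₊ : ℝ) ≤ (L : ℝ) := by exact_mod_cast (by omega : ⌈M / δ⌉₊ ≤ L)
    have h2 := Nat.le_ceil (M / δ)
    have h3 : M / δ ≤ (L : ℝ) := le_trans h2 h1
    rw [div_le_iff₀ hδ] at h3
    linarith only [h3]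
  have hKR : ((L/2 : ℕ) : ℝ) = (L:ℝ)/2 := by
    have h := congrArg (fun n : ℕ => (n : ℝ)) hL2
    push_cast at h
    linarith only [h]
  have hεhalf : (0:ℝ) < 1/2 - ε := by linarith only [hε2]
  have hcoord : ∀ i : Fin d, 1 ≤ min (x i).val (L - (x i).val) ∧
      ((min (x i).val (L - (x i).val) : ℕ) : ℝ) < ε * L := by
    intro i
    obtain ⟨h1, h2⟩ := hx i
    rw [← Int.cast_abs] at h2
    rw [coordRep_abs hLev] at h1 h2
    constructor
    · exact_mod_cast h1
    · exact_mod_cast h2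
  have hD2L : ∀ i : Fin d, 2 * min (x i).val (L - (x i).val) < L := by
    intro i
    have h1 := (hcoord i).2
    have hq : ε * L < (1/2) * L := by
      have := mul_lt_mul_of_pos_right (show ε < 1/2 by linarith only [hε2]) hLr
      linarith only [this]
    have hr : ((min (x i).val (L - (x i).val) : ℕ) : ℝ) < (L:ℝ)/2 := by
      linarith only [h1, hq]
    by_contra hcon
    push_neg at hcon
    have : (L:ℝ) ≤ 2 * ((min (x i).val (L - (x i).val) : ℕ) : ℝ) := by exact_mod_cast hcon
    linarith only [this, hr]
  have havg := hL₁ L hLev (le_trans (le_max_left _ _) hLge)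
  have hLdpos : (0:ℝ) < (L:ℝ)^d := by positivity
  have hsumge : (C₁ - δ) * (L:ℝ)^d ≤ ∑ y : Torus d L, twoPoint (phi L) (f1 L) (f2 L) 0 y := by
    rw [le_div_iff₀ hLdpos] at havg
    exact havg
  have hsumge' : (C + δ) * (L:ℝ)^d ≤ ∑ y : Torus d L, twoPoint (phi L) (f1 L) (f2 L) 0 y := by
    have hEq : C₁ - δ = C + δ := by rw [hδdef]; ring
    rw [hEq] at hsumge
    exact hsumge
  have hsumle : ∑ y : Torus d L, twoPoint (phi L) (f1 L) (f2 L) 0 y ≤ (L:ℝ)^d * M := by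
    calc ∑ y : Torus d L, twoPoint (phi L) (f1 L) (f2 L) 0 y
        ≤ ∑ _y : Torus d L, M := Finset.sum_le_sum (fun y _ => hbd L hLev 0 y)
      _ = (Fintype.card (Torus d L) : ℝ) * M := by
          rw [Finset.sum_const, nsmul_eq_mul, Finset.card_univ]
      _ = (L:ℝ)^d * M := by rw [card_torus]; push_cast; ring
  have hMC : δ ≤ M - C := by
    have h1 : (C + δ) * (L:ℝ)^d ≤ M * (L:ℝ)^d := by
      calc (C + δ) * (L:ℝ)^d ≤ ∑ y : Torus d L, twoPoint (phi L) (f1 L) (f2 L) 0 y := hsumge'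
        _ ≤ (L:ℝ)^d * M := hsumle
        _ = M * (L:ℝ)^d := by ring
    have h2 : C + δ ≤ M := le_of_mul_le_mul_right h1 hLdpos
    linarith only [h2, hδ]
  have hT : ∑ y : Torus d L, (M - twoPoint (phi L) (f1 L) (f2 L) 0 y) ≤
      (M - C - δ) * (L:ℝ)^d := by
    rw [Finset.sum_sub_distrib, Finset.sum_const, Finset.card_univ, card_torus, nsmul_eq_mul]
    have hcast : ((L^d : ℕ) : ℝ) = (L:ℝ)^d := by push_cast; ring
    rw [hcast]
    linarith only [hsumge']
  have hTnn : 0 ≤ ∑ y : Torus d L, (M - twoPoint (phi L) (f1 L) (f2 L) 0 y) :=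
    Finset.sum_nonneg (fun y _ => by linarith only [hbd L hLev 0 y])
  have hMCpos : (0:ℝ) < M - C := lt_of_lt_of_le hδ hMC
  have hPpos : (0:ℝ) < (1/2 - ε)^d := by positivity
  have hRpos : (0:ℝ) < (M - C)/(1/2 - ε)^d := by positivity
  suffices hfin2 : M - twoPoint (phi L) (f1 L) (f2 L) 0 x ≤ (M - C) / (1 / 2 - ε) ^ d by
    linarith only [hfin2]
  by_cases hsign : M - twoPoint (phi L) (f1 L) (f2 L) 0 x ≤ 0
  · linarith only [hsign, hRpos]
  push_neg at hsign
  rw [le_div_iff₀ hPpos]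
  set HH := M - twoPoint (phi L) (f1 L) (f2 L) 0 x with hHH
  by_cases hodd : ∃ j : Fin d, (x j).val % 2 = 1
  · -- CASE A : some odd coordinate
    obtain ⟨j, hj⟩ := hodd
    have hA := caseA (phi L) (f1 L) (f2 L) hLev (hRP L hLev) (hF1 L) (hF2 L) (hsym L hLev)
      (hbd L hLev) x j hj (hD2L j)
    rw [← hHH] at hA
    set D := min (x j).val (L - (x j).val) with hDd
    have hDle : D ≤ L/2 := by
      have := hD2L j
      omega
    have hDr : ((D : ℕ) : ℝ) < ε * L := (hcoord j).2
    have hNFA : (1/2 - ε) * L ≤ ((L/2 - D + 1 : ℕ) : ℝ) := by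
      have hc : ((L/2 - D + 1 : ℕ) : ℝ) = ((L/2 : ℕ) : ℝ) - (D : ℝ) + 1 := by
        push_cast [Nat.cast_sub hDle]
        ring
      rw [hc, hKR]
      linarith only [hDr]
    have hKcast : ((L^(d-1) : ℕ) : ℝ) = (L:ℝ)^(d-1) := by push_cast; ring
    have hLd : (L:ℝ)^d = (L:ℝ)^(d-1) * L := by
      rw [← pow_succ]
      congr 1
      omega
    have hstep1 : HH * (((1/2 - ε) * L) * (L:ℝ)^(d-1)) ≤ 2 * ((M - C - δ) * (L:ℝ)^d) := by
      calc HH * (((1/2 - ε) * L) * (L:ℝ)^(d-1))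
          ≤ HH * (((L/2 - D + 1 : ℕ) : ℝ) * ((L^(d-1) : ℕ) : ℝ)) := by
            apply mul_le_mul_of_nonneg_left _ (le_of_lt hsign)
            rw [hKcast]
            apply mul_le_mul_of_nonneg_right hNFA (by positivity)
        _ ≤ 2 * ∑ y : Torus d L, (M - twoPoint (phi L) (f1 L) (f2 L) 0 y) := hA
        _ ≤ 2 * ((M - C - δ) * (L:ℝ)^d) := by linarith only [hT]
    have hcancel : HH * (1/2 - ε) ≤ 2 * (M - C - δ) := by
      have hpos : (0:ℝ) < (L:ℝ)^(d-1) * L := by positivity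
      have h2 : HH * (1/2 - ε) * ((L:ℝ)^(d-1) * L) ≤
          2 * (M - C - δ) * ((L:ℝ)^(d-1) * L) := by
        calc HH * (1/2 - ε) * ((L:ℝ)^(d-1) * L)
            = HH * (((1/2 - ε) * L) * (L:ℝ)^(d-1)) := by ring
          _ ≤ 2 * ((M - C - δ) * (L:ℝ)^d) := hstep1
          _ = 2 * (M - C - δ) * ((L:ℝ)^(d-1) * L) := by rw [hLd]; ring
      exact le_of_mul_le_mul_right h2 hpos
    have hp1 : (1/2 - ε)^(d-1) ≤ 1/2 - ε := by
      calc (1/2 - ε)^(d-1) ≤ (1/2 - ε)^1 :=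
            pow_le_pow_of_le_one (le_of_lt hεhalf) (by linarith only [hε1]) (by omega)
        _ = 1/2 - ε := pow_one _
    have hp2 : (1/2 - ε)^(d-1) ≤ 1/2 := by linarith only [hp1, hε1]
    have hdd : (1/2 - ε)^d = (1/2 - ε) * (1/2 - ε)^(d-1) := by
      rw [← pow_succ']
      congr 1
      omega
    rw [hdd]
    have hMCd : 0 ≤ M - C - δ := by linarith only [hMC]
    have hpnn : 0 ≤ (1/2 - ε)^(d-1) := by positivity
    have hmul1 := mul_le_mul_of_nonneg_right hcancel hpnn
    have hmul2 := mul_le_mul_of_nonneg_left hp2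
      (by linarith only [hMCd] : (0:ℝ) ≤ 2*(M - C - δ))
    calc HH * ((1/2 - ε) * (1/2 - ε)^(d-1))
        = HH * (1/2 - ε) * (1/2 - ε)^(d-1) := by ring
      _ ≤ 2 * (M - C - δ) * (1/2 - ε)^(d-1) := hmul1
      _ ≤ 2 * (M - C - δ) * (1/2) := hmul2
      _ ≤ M - C := by linarith only [hMCd, hδ]
  · -- CASE B : all coordinates even
    push_neg at hodd
    have hallev : ∀ i, (x i).val % 2 = 0 := by
      intro i
      have := hodd i
      omega
    have hj0 : (0:ℕ) < d := by omega
    have hk0 : (1:ℕ) < d := by omega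
    set j : Fin d := ⟨0, hj0⟩ with hjdef
    set k : Fin d := ⟨1, hk0⟩ with hkdef
    have hjk : j ≠ k := by
      intro h
      have := congrArg Fin.val h
      rw [hjdef, hkdef] at this
      simp at this
    have hx0 : (x j).val ≠ 0 := by
      have := (hcoord j).1
      omega
    have hB := caseB (phi L) (f1 L) (f2 L) hLev (hRP L hLev) (hF1 L) (hF2 L) (hsym L hLev)
      (hbd L hLev) x hjk hallev hx0 (hD2L j)
    rw [← hHH] at hB
    set D := min (x j).val (L - (x j).val) with hDd
    have hDle : D ≤ L/2 := by
      have := hD2L j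
      omega
    have hDr : ((D : ℕ) : ℝ) < ε * L := (hcoord j).2
    set KR := (L:ℝ)/2 with hKRdef
    have hKRpos : 0 < KR := by rw [hKRdef]; positivity
    have hK1c : (((L/2)^(d-1) : ℕ) : ℝ) = KR^(d-1) := by
      push_cast
      rw [hKR]
    have hK2c : (((L/2)^(d-2) : ℕ) : ℝ) = KR^(d-2) := by
      push_cast
      rw [hKR]
    have hNFc : ((L/2 - D : ℕ) : ℝ) = KR - (D:ℝ) := by
      rw [Nat.cast_sub hDle, hKR]
    have hNFlb : KR * (1 - 2*ε) ≤ KR - (D:ℝ) := by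
      have he : ε * (L:ℝ) = 2 * (ε * KR) := by rw [hKRdef]; ring
      rw [he] at hDr
      linarith only [hDr]
    have hK12 : KR^(d-1) = KR * KR^(d-2) := by
      rw [← pow_succ']
      congr 1
      omega
    have hKRd : KR^d = KR^(d-1) * KR := by
      rw [← pow_succ]
      congr 1
      omega
    have hLKR : (L:ℝ) = 2 * KR := by rw [hKRdef]; ring
    have hLdKR : (L:ℝ)^d = 2^d * KR^d := by rw [hLKR, mul_pow]
    set B2 := ∑ y ∈ classOdd d L j, (M - twoPoint (phi L) (f1 L) (f2 L) 0 y) with hB2d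
    set B1o := ∑ y ∈ classOdd d L k, (M - twoPoint (phi L) (f1 L) (f2 L) 0 y) with hB1od
    set B1e := ∑ y ∈ classEven d L, (M - twoPoint (phi L) (f1 L) (f2 L) 0 y) with hB1ed
    have hBnn2 : 0 ≤ B2 :=
      Finset.sum_nonneg (fun y _ => by linarith only [hbd L hLev 0 y])
    have hBnno : 0 ≤ B1o :=
      Finset.sum_nonneg (fun y _ => by linarith only [hbd L hLev 0 y])
    have hBnne : 0 ≤ B1e :=
      Finset.sum_nonneg (fun y _ => by linarith only [hbd L hLev 0 y])
    have hmassT : B2 + B1o + B1e ≤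
        ∑ y : Torus d L, (M - twoPoint (phi L) (f1 L) (f2 L) 0 y) := by
      rw [hB2d, hB1od, hB1ed]
      exact tri_mass hjk _ (fun y => by linarith only [hbd L hLev 0 y])
    rw [hK1c, hK2c, hNFc] at hB
    have hK2nn : (0:ℝ) ≤ KR^(d-2) := by positivity
    have hK1nn : (0:ℝ) ≤ KR^(d-1) := by positivity
    have hDnn : (0:ℝ) ≤ ((D:ℕ):ℝ) := by positivity
    have hNF2 : 0 ≤ KR - (D:ℝ) := by
      rw [← hNFc]
      positivity
    have hNFK2 : (KR - (D:ℝ)) * KR^(d-2) ≤ KR^(d-1) := by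
      rw [hK12]
      have := mul_le_mul_of_nonneg_right
        (show KR - (D:ℝ) ≤ KR by linarith only [hDnn]) hK2nn
      linarith only [this]
    have hrhs : 2 * KR^(d-1) * B2 + (KR - (D:ℝ)) *
        (KR^(d-2) * (2 * B1o + 2 * B1e) + 2 * KR^(d-1) * (KR^(d-2) * (2*M))) ≤
        2 * KR^(d-1) * (B2 + B1o + B1e) + 4 * KR^(d-1) * KR^(d-1) * M := by
      have hmm1 := mul_le_mul_of_nonneg_right hNFK2
        (by linarith only [hBnno, hBnne] : (0:ℝ) ≤ 2*B1o + 2*B1e)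
      have hmm2 := mul_le_mul_of_nonneg_right hNFK2
        (mul_nonneg (mul_nonneg (by norm_num : (0:ℝ) ≤ 4) hK1nn) (le_of_lt hM))
      linarith only [hmm1, hmm2]
    have hTKR : ∑ y : Torus d L, (M - twoPoint (phi L) (f1 L) (f2 L) 0 y) ≤
        (M - C - δ) * (2^d * KR^d) := by
      rw [← hLdKR]
      exact hT
    have hchain : HH * (2 * KR^(d-1) * KR^(d-1) * (KR*(1-2*ε))) ≤
        2 * KR^(d-1) * ((M - C - δ) * (2^d * KR^d)) + 4 * KR^(d-1) * KR^(d-1) * M := by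
      have ha : HH * (2 * KR^(d-1) * KR^(d-1) * (KR*(1-2*ε))) ≤
          HH * (2 * (KR^(d-1))^2 * (KR - (D:ℝ))) := by
        apply mul_le_mul_of_nonneg_left _ (le_of_lt hsign)
        have := mul_le_mul_of_nonneg_left hNFlb
          (by positivity : (0:ℝ) ≤ 2 * (KR^(d-1))^2)
        calc 2 * KR^(d-1) * KR^(d-1) * (KR*(1-2*ε))
            = 2 * (KR^(d-1))^2 * (KR * (1-2*ε)) := by ring
          _ ≤ 2 * (KR^(d-1))^2 * (KR - (D:ℝ)) := this
      have hbb : HH * (2 * (KR^(d-1))^2 * (KR - (D:ℝ))) ≤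
          2 * KR^(d-1) * B2 + (KR - (D:ℝ)) *
            (KR^(d-2) * (2 * B1o + 2 * B1e) + 2 * KR^(d-1) * (KR^(d-2) * (2*M))) := hB
      have hTT := le_trans hmassT hTKR
      have hcc := mul_le_mul_of_nonneg_left hTT
        (by positivity : (0:ℝ) ≤ 2 * KR^(d-1))
      linarith only [ha, hbb, hrhs, hcc]
    have hX : (0:ℝ) < 2 * KR^(d-1) * KR^(d-1) := by positivity
    have hcancel : HH * (KR * (1-2*ε)) ≤ (M - C - δ) * (2^d * KR) + 2*M := by
      have h2 : (HH * (KR * (1-2*ε))) * (2 * KR^(d-1) * KR^(d-1)) ≤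
          ((M - C - δ) * (2^d * KR) + 2*M) * (2 * KR^(d-1) * KR^(d-1)) := by
        calc (HH * (KR * (1-2*ε))) * (2 * KR^(d-1) * KR^(d-1))
            = HH * (2 * KR^(d-1) * KR^(d-1) * (KR*(1-2*ε))) := by ring
          _ ≤ 2 * KR^(d-1) * ((M - C - δ) * (2^d * KR^d)) + 4 * KR^(d-1) * KR^(d-1) * M :=
              hchain
          _ = ((M - C - δ) * (2^d * KR) + 2*M) * (2 * KR^(d-1) * KR^(d-1)) := by
              rw [hKRd]
              ring
      exact le_of_mul_le_mul_right h2 hX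
    have h2d4 : (4:ℝ) ≤ 2^d := by
      calc (4:ℝ) = 2^2 := by norm_num
        _ ≤ 2^d := pow_le_pow_right₀ (by norm_num) hd
    have hMKR : 2*M ≤ 2^d * δ * KR := by
      have h1 : M ≤ 2*(δ*KR) := by
        rw [hLKR] at hLδ
        linarith only [hLδ]
      have h2 := mul_le_mul_of_nonneg_right h2d4
        (mul_nonneg (le_of_lt hδ) (le_of_lt hKRpos))
      linarith only [h1, h2]
    have hfinal1 : HH * (1-2*ε) ≤ 2^d * (M - C) := by
      have hKR2 : (HH * (1-2*ε)) * KR ≤ (2^d * (M - C)) * KR := by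
        calc (HH * (1-2*ε)) * KR = HH * (KR * (1-2*ε)) := by ring
          _ ≤ (M - C - δ) * (2^d * KR) + 2*M := hcancel
          _ ≤ (M - C - δ) * (2^d * KR) + 2^d * δ * KR := by linarith only [hMKR]
          _ = (2^d * (M - C)) * KR := by ring
      exact le_of_mul_le_mul_right hKR2 hKRpos
    have hhalfd : (1/2 - ε)^d = (1-2*ε)^d / 2^d := by
      rw [show (1/2 - ε : ℝ) = (1-2*ε)/2 by ring, div_pow]
    rw [hhalfd, ← mul_div_assoc]
    rw [div_le_iff₀ (by positivity : (0:ℝ) < (2:ℝ)^d)]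
    have h12e : (0:ℝ) ≤ 1 - 2*ε := by linarith only [hε2]
    have hq1 : (1-2*ε)^(d-1) ≤ 1 := pow_le_one₀ h12e (by linarith only [hε1])
    have hdd2 : (1-2*ε)^d = (1-2*ε) * (1-2*ε)^(d-1) := by
      rw [← pow_succ']
      congr 1
      omega
    rw [hdd2]
    have hqnn : 0 ≤ (1-2*ε)^(d-1) := by positivity
    have hmul1 := mul_le_mul_of_nonneg_right hfinal1 hqnn
    have h2dMC : (0:ℝ) ≤ 2^d * (M - C) :=
      mul_nonneg (le_of_lt (pow_pos (by norm_num) d)) (le_of_lt hMCpos)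
    have hmul2 := mul_le_mul_of_nonneg_left hq1 h2dMC
    calc HH * ((1-2*ε) * (1-2*ε)^(d-1))
        = HH * (1-2*ε) * (1-2*ε)^(d-1) := by ring
      _ ≤ 2^d * (M - C) * (1-2*ε)^(d-1) := hmul1
      _ ≤ 2^d * (M - C) * 1 := hmul2
      _ = (M - C) * 2^d := by ring

end RPPaper
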